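/- arXiv:1811.02039 — 4 statements merged into one kernel-verified Lean document; each statement's English description precedes it below -/
import Mathlib

section
/- For n ≥ 2 and 0 ≤ k ≤ n-1, the k-th elementary symmetric polynomial in the Young–Jucys–Murphy elements R_2,…,R_n of the group algebra ℂ[S_n] equals the sum, in the group algebra, of all permutations of S_n having exactly n−k cycles. -/
open Finset

/-- number of cycles of a permutation, counting fixed points -/
def numCycles {n : ℕ} (σ : Equiv.Perm (Fin n)) : ℕ :=
  σ.cycleType.card + (Finset.univ.filter fun x => σ x = x).card

/-- the Young–Jucys–Murphy element `R_i = ∑_{j<i} (j,i)` in `ℂ[S_n]`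
(indices `0`-based: `R_i` for `i : Fin n` corresponds to `R_{i+1}` in `1`-based notation,
and `R_0 = 0`). -/
noncomputable def JM {n : ℕ} (i : Fin n) : MonoidAlgebra ℂ (Equiv.Perm (Fin n)) :=
  ∑ j ∈ Finset.univ.filter (· < i), MonoidAlgebra.single (Equiv.swap j i) 1

open Equiv Equiv.Perm

section Aux

variable {n : ℕ}

lemma numCycles_eq (σ : Perm (Fin n)) :
    numCycles σ = Multiset.card σ.cycleType + (n - σ.support.card) := by
  have : (Finset.univ.filter fun x => σ x = x) = σ.supportᶜ := by
    ext x; simp [Equiv.Perm.mem_support]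
  rw [numCycles, this, Finset.card_compl]
  simp

lemma numCycles_one : numCycles (1 : Perm (Fin n)) = n := by
  simp [numCycles]

lemma numCycles_pos (hn : 1 ≤ n) (σ : Perm (Fin n)) : 1 ≤ numCycles σ := by
  by_cases h : σ = 1
  · subst h; rw [numCycles_one]; exact hn
  · have := Equiv.Perm.card_cycleType_pos.2 h
    rw [numCycles]; omega

lemma eq_one_of_numCycles (σ : Perm (Fin n)) (h : numCycles σ = n) : σ = 1 := by
  rw [numCycles_eq] at h
  have hs : σ.support.card ≤ n := by
    simpa using Finset.card_le_card (Finset.subset_univ σ.support)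
  have hsum : σ.cycleType.sum = σ.support.card := Equiv.Perm.sum_cycleType σ
  have h2 : Multiset.card σ.cycleType • 2 ≤ σ.cycleType.sum :=
    Multiset.card_nsmul_le_sum (fun x hx => Equiv.Perm.two_le_of_mem_cycleType hx)
  rw [smul_eq_mul] at h2
  have hcard0 : Multiset.card σ.cycleType = 0 := by omega
  exact Equiv.Perm.card_cycleType_eq_zero.mp hcard0

/-- a permutation fixing everything except possibly `0` is the identity -/
lemma eq_one_of_fix_ge_one (σ : Perm (Fin n)) (h : ∀ x : Fin n, 1 ≤ (x : ℕ) → σ x = x) :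
    σ = 1 := by
  have key : ∀ x : Fin n, σ x = x := by
    intro x
    rcases Nat.lt_or_ge 0 (x : ℕ) with hx | hx
    · exact h x hx
    · rcases Nat.lt_or_ge 0 ((σ x : Fin n) : ℕ) with hy | hy
      · exact σ.injective (h (σ x) hy)
      · exact Fin.ext (by omega)
  ext x
  simp [key x]

/-- joining a fixed point into a cycle yields a cycle -/
lemma isCycle_mul_swap {α : Type*} [DecidableEq α] [Fintype α] {c : Perm α} (hc : c.IsCycle)
    {i j : α} (hi : c i = i) (hj : c j ≠ j) : (c * Equiv.swap j i).IsCycle := by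
  have hji : j ≠ i := fun h => hj (h ▸ (h ▸ hi))
  set f : Perm α := c * Equiv.swap j i with hf
  have hfi : f i = c j := by simp [hf, Equiv.swap_apply_right]
  have hfj : f j = i := by simp [hf, Equiv.swap_apply_left, hi]
  have hfo : ∀ y, y ≠ i → y ≠ j → f y = c y := fun y h1 h2 => by
    simp [hf, Equiv.swap_apply_of_ne_of_ne h2 h1]
  have hcji : c j ≠ i := fun h => hji (c.injective (h.trans hi.symm))
  -- orbit claim
  have key : ∀ k : ℕ, f.SameCycle j ((c ^ k) j) := by
    intro k
    induction k with
    | zero => simpa using Equiv.Perm.SameCycle.refl f j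
    | succ k ih =>
      have hpow : (c ^ (k+1)) j = c ((c ^ k) j) := by
        rw [pow_succ', Perm.mul_apply]
      rcases eq_or_ne ((c ^ k) j) j with hkj | hkj
      · rw [hpow, hkj]
        have h1 : f.SameCycle j i := ⟨1, by simpa using hfj⟩
        have h2 : f i = c j := hfi
        exact h2 ▸ (Equiv.Perm.sameCycle_apply_right.mpr h1)
      · have hmem : (c ^ k) j ∈ c.support := by
          rw [Equiv.Perm.pow_apply_mem_support]
          exact Equiv.Perm.mem_support.mpr hj
        have hki : (c ^ k) j ≠ i := fun h => by
          rw [h] at hmem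
          exact (Equiv.Perm.mem_support.mp hmem) hi
        have : f ((c ^ k) j) = (c ^ (k+1)) j := by
          rw [hfo _ hki hkj, hpow]
        exact this ▸ Equiv.Perm.sameCycle_apply_right.mpr ih
  refine ⟨j, by rw [hfj]; exact hji.symm, fun y hy => ?_⟩
  rcases eq_or_ne y i with rfl | hyi
  · exact ⟨1, by simpa using hfj⟩
  rcases eq_or_ne y j with rfl | hyj
  · exact Equiv.Perm.SameCycle.refl _ _
  · have hcy : c y ≠ y := fun h => hy (by rw [hfo y hyi hyj, h])
    obtain ⟨k, _, _, hk⟩ := (hc.sameCycle hj hcy).exists_pow_eq c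
    exact hk ▸ key k

lemma support_mul_swap {α : Type*} [DecidableEq α] [Fintype α] {c : Perm α}
    {i j : α} (hi : c i = i) (hj : c j ≠ j) :
    (c * Equiv.swap j i).support = insert i c.support := by
  have hji : j ≠ i := fun h => hj (h ▸ (h ▸ hi))
  have hcji : c j ≠ i := fun h => hji (c.injective (h.trans hi.symm))
  ext y
  simp only [Equiv.Perm.mem_support, Finset.mem_insert, Perm.mul_apply]
  rcases eq_or_ne y i with rfl | hyi
  · simp [Equiv.swap_apply_right, hcji]
  rcases eq_or_ne y j with rfl | hyj
  · rw [Equiv.swap_apply_left, hi]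
    constructor
    · intro _; exact Or.inr hj
    · intro _; exact fun h => hyi h.symm
  · rw [Equiv.swap_apply_of_ne_of_ne hyj hyi]
    simp [hyi]

lemma numCycles_mul_swap (σ : Perm (Fin n)) {i j : Fin n} (hσi : σ i = i) (hij : j ≠ i) :
    numCycles (σ * Equiv.swap j i) + 1 = numCycles σ := by
  have hin : i ∉ σ.support := by simp [Equiv.Perm.mem_support, hσi]
  by_cases hj : σ j = j
  · -- disjoint case: swap joins two fixed points
    have hjn : j ∉ σ.support := by simp [Equiv.Perm.mem_support, hj]
    have hd : σ.Disjoint (Equiv.swap j i) := fun x => by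
      rcases eq_or_ne x i with rfl | hxi
      · exact Or.inl hσi
      rcases eq_or_ne x j with rfl | hxj
      · exact Or.inl hj
      · exact Or.inr (Equiv.swap_apply_of_ne_of_ne hxj hxi)
    have hct : (σ * Equiv.swap j i).cycleType = σ.cycleType + (Equiv.swap j i).cycleType :=
      hd.cycleType_mul
    have hsw : (Equiv.swap j i).cycleType = {2} := by
      rw [(Equiv.Perm.isCycle_swap hij).cycleType, Equiv.Perm.card_support_swap hij]
    have hsupp : (σ * Equiv.swap j i).support = σ.support ∪ {j, i} := by
      rw [hd.support_mul, Equiv.Perm.support_swap hij]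
    have hdisj : _root_.Disjoint σ.support ({j, i} : Finset (Fin n)) := by
      simp [Finset.disjoint_insert_right, Finset.disjoint_singleton_right, hin, hjn]
    have hcard : (σ * Equiv.swap j i).support.card = σ.support.card + 2 := by
      rw [hsupp, Finset.card_union_of_disjoint hdisj]
      simp [Finset.card_insert_of_notMem, hij]
    have hle : (σ * Equiv.swap j i).support.card ≤ n := by
      simpa using Finset.card_le_card (Finset.subset_univ (σ * Equiv.swap j i).support)
    rw [numCycles_eq, numCycles_eq, hct, hsw, hcard]
    simp only [Multiset.card_add, Multiset.card_singleton]
    omega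
  · -- j moved: swap extends the cycle of j by i
    set c : Perm (Fin n) := σ.cycleOf j with hc
    have hcic : c ∈ σ.cycleFactorsFinset :=
      Equiv.Perm.cycleOf_mem_cycleFactorsFinset_iff.mpr (Equiv.Perm.mem_support.mpr hj)
    have hcyc : c.IsCycle := Equiv.Perm.isCycle_cycleOf σ hj
    have hci : c i = i := by
      rw [hc, Equiv.Perm.cycleOf_apply]
      split <;> simp [hσi]
    have hcj : c j ≠ j := by
      rw [hc, Equiv.Perm.cycleOf_apply_self]; exact hj
    set ρ : Perm (Fin n) := σ * c⁻¹ with hρ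
    have hd : ρ.Disjoint c := Equiv.Perm.disjoint_mul_inv_of_mem_cycleFactorsFinset hcic
    have hρc : ρ * c = σ := by rw [hρ, inv_mul_cancel_right]
    have hρi : ρ i = i := by
      rw [hρ, Perm.mul_apply]
      have : c⁻¹ i = i := by rw [Equiv.Perm.inv_eq_iff_eq, hci]
      rw [this, hσi]
    have hiρ : i ∉ ρ.support := by simp [Equiv.Perm.mem_support, hρi]
    have hic : i ∉ c.support := by simp [Equiv.Perm.mem_support, hci]
    have hsupp' : (c * Equiv.swap j i).support = insert i c.support := support_mul_swap hci hcj
    have hd' : ρ.Disjoint (c * Equiv.swap j i) := by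
      rw [Equiv.Perm.disjoint_iff_disjoint_support, hsupp',
        Finset.disjoint_insert_right]
      exact ⟨hiρ, (Equiv.Perm.disjoint_iff_disjoint_support.mp hd)⟩
    have hcyc' : (c * Equiv.swap j i).IsCycle := isCycle_mul_swap hcyc hci hcj
    have hassoc : σ * Equiv.swap j i = ρ * (c * Equiv.swap j i) := by
      rw [← mul_assoc, hρc]
    have hct1 : σ.cycleType = ρ.cycleType + {c.support.card} := by
      rw [← hρc, hd.cycleType_mul, hcyc.cycleType]
    have hct2 : (σ * Equiv.swap j i).cycleType = ρ.cycleType + {c.support.card + 1} := by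
      rw [hassoc, hd'.cycleType_mul, hcyc'.cycleType, hsupp',
        Finset.card_insert_of_notMem hic]
    have hs1 : σ.support.card = ρ.support.card + c.support.card := by
      rw [← hρc, hd.support_mul,
        Finset.card_union_of_disjoint (Equiv.Perm.disjoint_iff_disjoint_support.mp hd)]
    have hs2 : (σ * Equiv.swap j i).support.card = ρ.support.card + c.support.card + 1 := by
      rw [hassoc, hd'.support_mul,
        Finset.card_union_of_disjoint (Equiv.Perm.disjoint_iff_disjoint_support.mp hd'),
        hsupp', Finset.card_insert_of_notMem hic]
      omega
    have hle : (σ * Equiv.swap j i).support.card ≤ n := by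
      simpa using Finset.card_le_card (Finset.subset_univ (σ * Equiv.swap j i).support)
    rw [numCycles_eq, numCycles_eq, hct1, hct2, hs1, hs2]
    simp only [Multiset.card_add, Multiset.card_singleton]
    omega

end Aux

section Main

variable {n : ℕ}

lemma sort_insert_max {s : Finset (Fin n)} {a : Fin n} (h1 : ∀ b ∈ s, b ≤ a) (h2 : a ∉ s) :
    (insert a s).sort (· ≤ ·) = s.sort (· ≤ ·) ++ [a] := by
  refine (fun hp hs => List.Perm.eq_of_pairwise' (Finset.pairwise_sort _ _) hs hp) ?_ ?_
  · have hp : ((insert a s).sort (· ≤ ·) : Multiset (Fin n))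
        = ((a :: s.sort (· ≤ ·) : List (Fin n)) : Multiset (Fin n)) := by
      rw [Finset.sort_eq, Finset.insert_val_of_notMem h2, ← Multiset.cons_coe, Finset.sort_eq]
    exact (Multiset.coe_eq_coe.mp hp).trans (List.perm_append_singleton a _).symm
  · refine List.pairwise_append.mpr ⟨Finset.pairwise_sort _ _, List.pairwise_singleton _ _, ?_⟩
    intro b hb c hc
    rw [List.mem_singleton] at hc
    subst hc
    exact h1 b (Finset.mem_sort (α := Fin n) (· ≤ ·) |>.mp hb)

lemma filter_fix_zero (hn : 1 ≤ n) (M : ℕ) :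
    ((Finset.univ : Finset (Perm (Fin n))).filter
      (fun σ => numCycles σ = n - 0 ∧ ∀ x : Fin n, M ≤ (x : ℕ) → σ x = x)) = {1} := by
  ext σ
  simp only [Finset.mem_filter, Finset.mem_univ, true_and, Finset.mem_singleton, Nat.sub_zero]
  constructor
  · rintro ⟨hnc, -⟩
    exact eq_one_of_numCycles σ hnc
  · rintro rfl
    exact ⟨numCycles_one, fun x _ => rfl⟩

lemma main_induction (n m : ℕ) (h1 : 1 ≤ m) : m ≤ n → ∀ k : ℕ,
    ∑ s ∈ ((Finset.univ : Finset (Fin n)).filter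
        fun i : Fin n => 0 < (i : ℕ) ∧ (i : ℕ) < m).powersetCard k,
      ((s.sort (· ≤ ·)).map JM).prod =
    ∑ σ ∈ (Finset.univ : Finset (Perm (Fin n))).filter
        (fun σ => numCycles σ = n - k ∧ ∀ x : Fin n, m ≤ (x : ℕ) → σ x = x),
      MonoidAlgebra.single σ (1 : ℂ) := by
  induction m, h1 using Nat.le_induction with
  | base =>
    intro hmn k
    have hn1 : 1 ≤ n := hmn
    have hemp : ((Finset.univ : Finset (Fin n)).filter
        fun i : Fin n => 0 < (i : ℕ) ∧ (i : ℕ) < 1) = ∅ := by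
      ext x
      simp only [Finset.mem_filter, Finset.mem_univ, true_and, Finset.notMem_empty, iff_false]
      omega
    rw [hemp]
    cases k with
    | zero =>
      rw [Finset.powersetCard_zero, Finset.sum_singleton, Finset.sort_empty, filter_fix_zero hn1,
        Finset.sum_singleton]
      simp [MonoidAlgebra.one_def]
    | succ k =>
      rw [Finset.powersetCard_eq_empty.mpr (by simp), Finset.sum_empty]
      have : ((Finset.univ : Finset (Perm (Fin n))).filter
          (fun σ => numCycles σ = n - (k+1) ∧ ∀ x : Fin n, 1 ≤ (x : ℕ) → σ x = x)) = ∅ := by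
        ext σ
        simp only [Finset.mem_filter, Finset.mem_univ, true_and, Finset.notMem_empty, iff_false,
          not_and]
        intro hnc hfix
        have : σ = 1 := eq_one_of_fix_ge_one σ hfix
        rw [this, numCycles_one] at hnc
        omega
      rw [this, Finset.sum_empty]
  | succ m hm ih =>
    intro hmn k
    have hmn' : m ≤ n := by omega
    have hn1 : 1 ≤ n := by omega
    have hmlt : m < n := hmn
    set ii : Fin n := ⟨m, hmlt⟩ with hiidef
    have hiico : (ii : ℕ) = m := rfl
    set A := (Finset.univ : Finset (Fin n)).filter
        (fun x : Fin n => 0 < (x : ℕ) ∧ (x : ℕ) < m) with hA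
    have hiA : ii ∉ A := by
      simp only [hA, Finset.mem_filter, Finset.mem_univ, true_and, hiico]
      omega
    have hA1 : ((Finset.univ : Finset (Fin n)).filter
        fun x : Fin n => 0 < (x : ℕ) ∧ (x : ℕ) < m + 1) = insert ii A := by
      ext x
      simp only [hA, Finset.mem_filter, Finset.mem_univ, true_and, Finset.mem_insert]
      have hxi : (x = ii) ↔ ((x : ℕ) = m) := by rw [Fin.ext_iff]
      rw [hxi]
      omega
    cases k with
    | zero =>
      rw [Finset.powersetCard_zero, Finset.sum_singleton, Finset.sort_empty,
        filter_fix_zero hn1, Finset.sum_singleton]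
      simp [MonoidAlgebra.one_def]
    | succ k =>
      -- LHS decomposition
      rw [hA1, Finset.powersetCard_succ_insert hiA]
      have hdisj : Disjoint (A.powersetCard (k+1)) ((A.powersetCard k).image (insert ii)) := by
        rw [Finset.disjoint_right]
        intro s hs hs'
        obtain ⟨t, ht, rfl⟩ := Finset.mem_image.mp hs
        have hsub := (Finset.mem_powersetCard.mp hs').1
        exact hiA (hsub (Finset.mem_insert_self ii t))
      rw [Finset.sum_union hdisj]
      have hinj : ∀ s ∈ A.powersetCard k, ∀ t ∈ A.powersetCard k,
          insert ii s = insert ii t → s = t := by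
        intro s hs t ht hst
        have his : ii ∉ s := fun h => hiA ((Finset.mem_powersetCard.mp hs).1 h)
        have hit : ii ∉ t := fun h => hiA ((Finset.mem_powersetCard.mp ht).1 h)
        rw [← Finset.erase_insert his, ← Finset.erase_insert hit, hst]
      rw [Finset.sum_image hinj]
      have hsort : ∀ s ∈ A.powersetCard k,
          (((insert ii s).sort (· ≤ ·)).map JM).prod
            = ((s.sort (· ≤ ·)).map JM).prod * JM ii := by
        intro s hs
        have hsub := (Finset.mem_powersetCard.mp hs).1
        have hle : ∀ b ∈ s, b ≤ ii := by
          intro b hb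
          have := (Finset.mem_filter.mp (hsub hb)).2.2
          rw [Fin.le_def, hiico]
          omega
        have his : ii ∉ s := fun h => hiA (hsub h)
        rw [sort_insert_max hle his, List.map_append, List.prod_append]
        simp
      rw [Finset.sum_congr rfl hsort, ← Finset.sum_mul, ih hmn' (k+1), ih hmn' k]
      -- RHS decomposition
      rw [← Finset.sum_filter_add_sum_filter_not
        ((Finset.univ : Finset (Perm (Fin n))).filter
          (fun σ => numCycles σ = n - (k+1) ∧ ∀ x : Fin n, m + 1 ≤ (x : ℕ) → σ x = x))
        (fun σ => σ ii = ii)]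
      congr 1
      · -- permutations fixing ii
        apply Finset.sum_congr _ (fun _ _ => rfl)
        ext σ
        simp only [Finset.mem_filter, Finset.mem_univ, true_and, and_assoc]
        constructor
        · rintro ⟨h1', h2'⟩
          exact ⟨h1', fun x hx => h2' x (by omega), h2' ii (by rw [hiico])⟩
        · rintro ⟨h1', h2', h3'⟩
          refine ⟨h1', fun x hx => ?_⟩
          rcases eq_or_lt_of_le hx with heq | hlt
          · have : x = ii := Fin.ext (by omega)
            rw [this, h3']
          · exact h2' x (by omega)
      · -- permutations moving ii :  bijection with pairs (σ', j)
        simp only [JM]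
        rw [Finset.sum_mul_sum]
        simp only [MonoidAlgebra.single_mul_single, one_mul]
        rw [← Finset.sum_product']
        refine Finset.sum_nbij' (fun p => p.1 * Equiv.swap p.2 ii)
          (fun σ => (σ * Equiv.swap (σ⁻¹ ii) ii, σ⁻¹ ii)) ?_ ?_ ?_ ?_ (fun p _ => rfl)
        · rintro ⟨σ', j⟩ hp
          simp only [Finset.mem_product, Finset.mem_filter, Finset.mem_univ, true_and] at hp
          obtain ⟨⟨hnc', hfix'⟩, hjlt'⟩ := hp
          have hnc2 : numCycles σ' = n - k := hnc'
          have hfix2 : ∀ x : Fin n, m ≤ (x : ℕ) → σ' x = x := hfix'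
          have hjlt : (j : ℕ) < m := by
            have h := hjlt'
            rw [Fin.lt_def, hiico] at h
            exact h
          have hσii : σ' ii = ii := hfix2 ii (by rw [hiico])
          have hjii : j ≠ ii := by
            intro h
            rw [h, hiico] at hjlt
            omega
          have hkey := numCycles_mul_swap σ' hσii hjii
          simp only [Finset.mem_filter, Finset.mem_univ, true_and]
          refine ⟨⟨?_, ?_⟩, ?_⟩
          · show numCycles (σ' * Equiv.swap j ii) = n - (k + 1)
            omega
          · show ∀ x : Fin n, m + 1 ≤ (x : ℕ) → (σ' * Equiv.swap j ii) x = x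
            intro x hx
            have hxj : x ≠ j := by
              intro h; rw [h] at hx; omega
            have hxii : x ≠ ii := by
              intro h; rw [h, hiico] at hx; omega
            rw [Perm.mul_apply, Equiv.swap_apply_of_ne_of_ne hxj hxii]
            exact hfix2 x (by omega)
          · show ¬ (σ' * Equiv.swap j ii) ii = ii
            rw [Perm.mul_apply, Equiv.swap_apply_right]
            intro h
            exact hjii (σ'.injective (h.trans hσii.symm))
        · intro σ hσ
          simp only [Finset.mem_filter, Finset.mem_univ, true_and, and_assoc] at hσ
          obtain ⟨hnc, hfix, hne⟩ := hσ
          have hj : σ (σ⁻¹ ii) = ii := Equiv.apply_symm_apply σ ii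
          have hjii : σ⁻¹ ii ≠ ii := by
            intro h
            apply hne
            conv_lhs => rw [← h]
            exact hj
          have hjlt : ((σ⁻¹ ii : Fin n) : ℕ) < m := by
            by_contra hge
            push_neg at hge
            rcases eq_or_lt_of_le hge with heq | hlt
            · exact hjii (Fin.ext (by rw [hiico]; omega))
            · have := hfix (σ⁻¹ ii) (by omega)
              rw [hj] at this
              exact hjii this.symm
          have hσ'ii : (σ * Equiv.swap (σ⁻¹ ii) ii) ii = ii := by
            rw [Perm.mul_apply, Equiv.swap_apply_right, hj]
          have hσ'fix : ∀ x : Fin n, m ≤ (x : ℕ) → (σ * Equiv.swap (σ⁻¹ ii) ii) x = x := by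
            intro x hx
            rcases eq_or_lt_of_le hx with heq | hlt
            · have : x = ii := Fin.ext (by omega)
              rw [this]; exact hσ'ii
            · have hxj : x ≠ σ⁻¹ ii := by
                intro h; rw [h] at hlt; omega
              have hxii : x ≠ ii := by
                intro h; rw [h, hiico] at hlt; omega
              rw [Perm.mul_apply, Equiv.swap_apply_of_ne_of_ne hxj hxii]
              exact hfix x (by omega)
          have hback : (σ * Equiv.swap (σ⁻¹ ii) ii) * Equiv.swap (σ⁻¹ ii) ii = σ :=
            Equiv.mul_swap_mul_self _ _ _
          have hkey := numCycles_mul_swap (σ * Equiv.swap (σ⁻¹ ii) ii) hσ'ii hjii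
          rw [hback] at hkey
          have hpos := numCycles_pos hn1 σ
          simp only [Finset.mem_product, Finset.mem_filter, Finset.mem_univ, true_and]
          refine ⟨⟨?_, hσ'fix⟩, ?_⟩
          · show numCycles (σ * Equiv.swap (σ⁻¹ ii) ii) = n - k
            omega
          · show σ⁻¹ ii < ii
            rw [Fin.lt_def, hiico]
            exact hjlt
        · rintro ⟨σ', j⟩ hp
          simp only [Finset.mem_product, Finset.mem_filter, Finset.mem_univ, true_and] at hp
          obtain ⟨⟨hnc', hfix'⟩, hjlt'⟩ := hp
          have hσii : σ' ii = ii := hfix' ii (by rw [hiico])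
          have hinv : (σ' * Equiv.swap j ii)⁻¹ ii = j := by
            rw [mul_inv_rev, Perm.mul_apply, Equiv.swap_inv]
            have : σ'⁻¹ ii = ii := by
              rw [Equiv.Perm.inv_eq_iff_eq, hσii]
            rw [this, Equiv.swap_apply_right]
          show ((σ' * Equiv.swap j ii) * Equiv.swap ((σ' * Equiv.swap j ii)⁻¹ ii) ii,
              (σ' * Equiv.swap j ii)⁻¹ ii) = (σ', j)
          rw [Prod.ext_iff]
          refine ⟨?_, hinv⟩
          simp only
          rw [hinv, Equiv.mul_swap_mul_self]
        · intro σ hσ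
          show (σ * Equiv.swap (σ⁻¹ ii) ii) * Equiv.swap (σ⁻¹ ii) ii = σ
          exact Equiv.mul_swap_mul_self _ _ _

end Main

/-- Diaconis–Green: the `k`-th elementary symmetric function
`e_k(R_2,…,R_n) = ∑_{i₁<⋯<i_k} R_{i₁}⋯R_{i_k}` in the Young–Jucys–Murphy elements equals
the sum in the group algebra of all permutations of `S_n` with exactly `n-k` cycles. -/
theorem stmt2 (n : ℕ) (hn : 2 ≤ n) (k : ℕ) (hk : k ≤ n - 1) :
    ∑ s ∈ (Finset.univ.filter fun i : Fin n => 0 < (i : ℕ)).powersetCard k,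
      ((s.sort (· ≤ ·)).map JM).prod =
    ∑ σ ∈ Finset.univ.filter (fun σ : Equiv.Perm (Fin n) => numCycles σ = n - k),
      MonoidAlgebra.single σ (1 : ℂ) := by
  have h := main_induction n n (by omega) le_rfl k
  have e1 : ((Finset.univ : Finset (Fin n)).filter fun i : Fin n => 0 < (i : ℕ) ∧ (i : ℕ) < n)
      = (Finset.univ.filter fun i : Fin n => 0 < (i : ℕ)) := by
    apply Finset.filter_congr
    intro x _
    simp [x.isLt]
  have e2 : ((Finset.univ : Finset (Perm (Fin n))).filter
      (fun σ => numCycles σ = n - k ∧ ∀ x : Fin n, n ≤ (x : ℕ) → σ x = x))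
      = Finset.univ.filter (fun σ : Equiv.Perm (Fin n) => numCycles σ = n - k) := by
    apply Finset.filter_congr
    intro σ _
    have : ∀ x : Fin n, n ≤ (x : ℕ) → σ x = x := fun x hx => absurd x.isLt (by omega)
    simp [this]
  rw [e1, e2] at h
  exact h
end

section
/- Let k be a positive integer and λ, μ partitions of n with λ ⪰ μ in dominance order. Then ∏_{boxes b of λ}(k + c(b)) ≥ ∏_{boxes b of μ}(k + c(b)) ≥ 0, where c(b) is the content of box b. -/
open Finset

/-- Young diagram of a partition -/
def toYD {n : ℕ} (p : Nat.Partition n) : YoungDiagram :=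
  YoungDiagram.ofRowLens (p.parts.sort (· ≥ ·)) (List.sortedGE_iff_pairwise.mpr (p.parts.pairwise_sort (· ≥ ·)))

/-- dominance order on partitions of `n` -/
def Dominates {n : ℕ} (p q : Nat.Partition n) : Prop :=
  ∀ j, ((q.parts.sort (· ≥ ·)).take j).sum ≤ ((p.parts.sort (· ≥ ·)).take j).sum

def P (k : ℕ) (g : ℕ → ℕ) : ℤ := ∏ i ∈ range k, ∏ c ∈ range (g i), ((k:ℤ) + c - i)

def row (k : ℕ) (i m : ℕ) : ℤ := ∏ c ∈ range m, ((k:ℤ) + c - i)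

lemma row_pos {k i : ℕ} (h : i < k) (m : ℕ) : 0 < row k i m := by
  apply Finset.prod_pos
  intro c hc
  have h1 : (i:ℤ) < k := by exact_mod_cast h
  have h2 : (0:ℤ) ≤ c := Int.natCast_nonneg c
  linarith

lemma P_eq_prod_row (k : ℕ) (g : ℕ → ℕ) : P k g = ∏ i ∈ range k, row k i (g i) := rfl

lemma P_pos (k : ℕ) (g : ℕ → ℕ) : 0 < P k g := by
  apply Finset.prod_pos
  intro i hi
  exact row_pos (mem_range.mp hi) _

lemma step_ineq (k : ℕ) (g : ℕ → ℕ) (s t : ℕ) (hst : s < t) (htk : t < k)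
    (hgt1 : 1 ≤ g t) (hgst : g t ≤ g s) :
    P k g ≤ P k (fun i => if i = s then g s + 1 else if i = t then g t - 1 else g i) := by
  set g' : ℕ → ℕ := fun i => if i = s then g s + 1 else if i = t then g t - 1 else g i with hg'
  have hsk : s < k := lt_trans hst htk
  have hne : s ≠ t := Nat.ne_of_lt hst
  have hsmem : s ∈ range k := mem_range.mpr hsk
  have htmem : t ∈ (range k).erase s := by
    rw [mem_erase]; exact ⟨(Nat.ne_of_lt hst).symm, mem_range.mpr htk⟩
  set A : ℤ := ∏ i ∈ ((range k).erase s).erase t, row k i (g i) with hA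
  have hApos : 0 < A := by
    apply Finset.prod_pos
    intro i hi
    have : i ∈ range k := mem_of_mem_erase (mem_of_mem_erase hi)
    exact row_pos (mem_range.mp this) _
  have hsplit : ∀ h : ℕ → ℕ, (∀ i, i ≠ s → i ≠ t → h i = g i) →
      P k h = row k s (h s) * (row k t (h t) * A) := by
    intro h hh
    rw [P_eq_prod_row, ← Finset.mul_prod_erase _ _ hsmem, ← Finset.mul_prod_erase _ _ htmem]
    congr 1
    congr 1
    apply Finset.prod_congr rfl
    intro i hi
    rw [hh i (mem_erase.mp (mem_of_mem_erase hi)).1 (mem_erase.mp hi).1]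
  set m : ℕ := g t - 1 with hm
  have hmt : g t = m + 1 := by omega
  have e1 : P k g = row k s (g s) * (row k t m * ((k:ℤ) + m - t) * A) := by
    rw [hsplit g (fun _ _ _ => rfl), hmt]
    simp only [row, Finset.prod_range_succ]
    try ring
  have e2 : P k g' = row k s (g s) * ((k:ℤ) + g s - s) * (row k t m * A) := by
    rw [hsplit g' (by intro i h1 h2; simp [hg', h1, h2])]
    have hs' : g' s = g s + 1 := by simp [hg']
    have ht' : g' t = m := by simp [hg', hne.symm]
    rw [hs', ht']
    simp only [row, Finset.prod_range_succ]
    try ring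
  have hy : (0:ℤ) < (k:ℤ) + m - t := by
    have : (t:ℤ) < k := by exact_mod_cast htk
    have : (0:ℤ) ≤ m := Int.natCast_nonneg m
    linarith
  have hxy : (k:ℤ) + m - t ≤ (k:ℤ) + g s - s := by
    have h1 : (m:ℤ) ≤ g s := by exact_mod_cast le_trans (by omega) hgst
    have h2 : (s:ℤ) ≤ t := by exact_mod_cast le_of_lt hst
    linarith
  have hrs := row_pos hsk (g s)
  have hrt := row_pos htk m
  rw [e1, e2]
  nlinarith [mul_pos hrs hrt, mul_pos (mul_pos hrs hrt) hApos]

lemma key (k : ℕ) (f : ℕ → ℕ) (hf : Antitone f) :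
    ∀ D g, Antitone g → g k = 0 →
    (∑ i ∈ range k, g i = ∑ i ∈ range k, f i) →
    (∀ j, j ≤ k → ∑ i ∈ range j, g i ≤ ∑ i ∈ range j, f i) →
    (∑ j ∈ range (k+1), (∑ i ∈ range j, f i - ∑ i ∈ range j, g i) = D) →
    P k g ≤ P k f := by
  intro D
  induction D using Nat.strong_induction_on with
  | _ D IH =>
  intro g hg hgk hsum hdom hD
  by_cases hall : ∀ j, j ≤ k → ∑ i ∈ range j, g i = ∑ i ∈ range j, f i
  · have : ∀ i ∈ range k, (∏ c ∈ range (g i), ((k:ℤ) + c - i)) = ∏ c ∈ range (f i), ((k:ℤ) + c - i) := by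
      intro i hi
      have hik := mem_range.mp hi
      have h1 := hall i (le_of_lt hik)
      have h2 := hall (i+1) hik
      rw [Finset.sum_range_succ, Finset.sum_range_succ] at h2
      have : g i = f i := by omega
      rw [this]
    exact le_of_eq (Finset.prod_congr rfl this)
  · push_neg at hall
    have hex : ∃ j, j ≤ k ∧ ∑ i ∈ range j, g i < ∑ i ∈ range j, f i := by
      obtain ⟨j, hj, hne⟩ := hall
      exact ⟨j, hj, lt_of_le_of_ne (hdom j hj) hne⟩
    classical
    set j₀ := Nat.find hex with hj₀
    obtain ⟨hj₀k, hj₀lt⟩ := Nat.find_spec hex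
    rw [← hj₀] at hj₀k hj₀lt
    have hj₀pos : 0 < j₀ := by
      rcases Nat.eq_zero_or_pos j₀ with h | h
      · rw [h] at hj₀lt; simp at hj₀lt
      · exact h
    set s := j₀ - 1 with hs
    have hsj : j₀ = s + 1 := by omega
    have hs1k : s + 1 ≤ k := by omega
    have hs1lt : ∑ i ∈ range (s+1), g i < ∑ i ∈ range (s+1), f i := by rw [← hsj]; exact hj₀lt
    have heqbelow : ∀ j, j ≤ s → ∑ i ∈ range j, g i = ∑ i ∈ range j, f i := by
      intro j hj
      have hjk : j ≤ k := by omega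
      have hmin := Nat.find_min hex (show j < j₀ by omega)
      push_neg at hmin
      exact le_antisymm (hdom j hjk) (hmin hjk)
    have hfgs : g s < f s := by
      have h1 := heqbelow s le_rfl
      rw [Finset.sum_range_succ, Finset.sum_range_succ] at hs1lt
      omega
    have hgs1 : 1 ≤ g (s+1) := by
      by_contra hc
      push_neg at hc
      have h0 : g (s+1) = 0 := by omega
      have hzero : ∀ i, s+1 ≤ i → g i = 0 := fun i hi => Nat.le_zero.mp (h0 ▸ hg hi)
      have he : ∑ i ∈ range k, g i = ∑ i ∈ range (s+1), g i := by
        rw [← Finset.sum_range_add_sum_Ico g hs1k]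
        have : ∑ i ∈ Ico (s+1) k, g i = 0 :=
          Finset.sum_eq_zero (fun i hi => hzero i (mem_Ico.mp hi).1)
        omega
      have hmono : ∑ i ∈ range (s+1), f i ≤ ∑ i ∈ range k, f i := by
        rw [← Finset.sum_range_add_sum_Ico f hs1k]; omega
      omega
    set t := Nat.findGreatest (fun j => s < j ∧ g j = g (s+1)) k with ht
    have htspec : s < t ∧ g t = g (s+1) := by
      have hP : (fun j => s < j ∧ g j = g (s+1)) (s+1) := ⟨Nat.lt_succ_self s, rfl⟩
      exact Nat.findGreatest_spec (P := fun j => s < j ∧ g j = g (s+1)) hs1k hP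
    have hst : s < t := htspec.1
    have hgtv : g t = g (s+1) := htspec.2
    have htk : t ≤ k := Nat.findGreatest_le k
    have htltk : t < k := by
      rcases lt_or_eq_of_le htk with h | h
      · exact h
      · exfalso; rw [h] at hgtv; omega
    have hdrop : g (t+1) < g t := by
      have hmax := Nat.findGreatest_is_greatest (show t < t + 1 by omega) (show t + 1 ≤ k by omega)
      push_neg at hmax
      have h1 : g (t+1) ≠ g (s+1) := hmax (by omega)
      have h2 : g (t+1) ≤ g t := hg (Nat.le_succ t)
      omega
    have hconst : ∀ i, s+1 ≤ i → i ≤ t → g i = g (s+1) := by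
      intro i h1 h2
      have := hg h1
      have := hg h2
      omega
    have hstrict : ∀ j, s+1 ≤ j → j ≤ t → ∑ i ∈ range j, g i < ∑ i ∈ range j, f i := by
      intro j h1 h2
      have hjk : j ≤ k := le_trans h2 htk
      rcases lt_or_eq_of_le (hdom j hjk) with h | h
      · exact h
      exfalso
      have hj2 : s + 1 < j := by
        rcases lt_or_eq_of_le h1 with h' | h'
        · exact h'
        · exfalso; rw [← h'] at h; omega
      have hsum1 : ∑ i ∈ Ico (s+1) j, f i < ∑ i ∈ Ico (s+1) j, g i := by
        have e1 := Finset.sum_range_add_sum_Ico f (le_of_lt hj2)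
        have e2 := Finset.sum_range_add_sum_Ico g (le_of_lt hj2)
        omega
      obtain ⟨i₀, hi₀, hfi₀⟩ := Finset.exists_lt_of_sum_lt hsum1
      rw [mem_Ico] at hi₀
      have hfi₀' : f i₀ < g (s+1) := by
        rw [← hconst i₀ hi₀.1 (by omega)]; exact hfi₀
      have hsum2 : ∑ i ∈ Ico j (t+1), (f i + 1) ≤ ∑ i ∈ Ico j (t+1), g i := by
        apply Finset.sum_le_sum
        intro i hi
        rw [mem_Ico] at hi
        have hle : f i ≤ f i₀ := hf (by omega)
        have heq : g i = g (s+1) := hconst i (by omega) (by omega)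
        omega
      have hcard : 0 < (Ico j (t+1)).card := by
        rw [Nat.card_Ico]; omega
      rw [Finset.sum_add_distrib, Finset.sum_const, smul_eq_mul, mul_one] at hsum2
      have e3 := Finset.sum_range_add_sum_Ico f (show j ≤ t+1 by omega)
      have e4 := Finset.sum_range_add_sum_Ico g (show j ≤ t+1 by omega)
      have h5 := hdom (t+1) (by omega)
      omega
    set g' : ℕ → ℕ := fun i => if i = s then g s + 1 else if i = t then g t - 1 else g i with hg'
    have hgs_ge : g t ≤ g s := by
      have h6 : g (s+1) ≤ g s := hg (Nat.le_succ s)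
      omega
    have hkey : P k g ≤ P k g' := by
      rw [hg']
      exact step_ineq k g s t hst htltk (by omega) hgs_ge
    have hv : ∀ j, g' j = if j = s then g s + 1 else if j = t then g t - 1 else g j :=
      fun j => rfl
    have hS : ∀ j, ∑ i ∈ range j, g' i =
        ∑ i ∈ range j, g i + (if s < j then 1 else 0) - (if t < j then 1 else 0) := by
      intro j
      induction j with
      | zero => simp
      | succ j ih =>
        rw [Finset.sum_range_succ, Finset.sum_range_succ, ih, hv]
        by_cases h1 : j = s
        · subst h1; rw [if_pos rfl]; split_ifs <;> omega
        · by_cases h2 : j = t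
          · subst h2; rw [if_neg h1, if_pos rfl]; split_ifs <;> omega
          · rw [if_neg h1, if_neg h2]; split_ifs <;> omega
    have hgsm1 : 0 < s → g s + 1 ≤ g (s - 1) := by
      intro hspos
      have e1 := heqbelow s le_rfl
      have e2 := heqbelow (s-1) (by omega)
      have hss : s = (s-1) + 1 := by omega
      have e1' : ∑ i ∈ range ((s-1)+1), g i = ∑ i ∈ range ((s-1)+1), f i := by
        rw [← hss]; exact e1
      rw [Finset.sum_range_succ, Finset.sum_range_succ] at e1'
      have hgf : g (s-1) = f (s-1) := by omega
      have : f s ≤ f (s-1) := hf (by omega)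
      omega
    have hg'anti : Antitone g' := by
      apply antitone_nat_of_succ_le
      intro i
      have hstep : g (i+1) ≤ g i := hg (Nat.le_succ i)
      show g' (i+1) ≤ g' i
      by_cases h1 : i = s
      · rw [hv, hv, if_neg (by omega), if_pos h1]
        have e : g i = g s := by rw [h1]
        by_cases h2 : i + 1 = t
        · rw [if_pos h2]
          omega
        · rw [if_neg h2]
          omega
      · by_cases h2 : i = t
        · rw [hv, hv, if_neg (by omega), if_neg (by omega), if_neg h1, if_pos h2]
          have e : g (i+1) = g (t+1) := by rw [h2]
          omega
        · by_cases h3 : i + 1 = s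
          · have h5 := hgsm1 (by omega)
            have e : s - 1 = i := by omega
            rw [e] at h5
            rw [hv, hv, if_pos h3, if_neg h1, if_neg h2]
            exact h5
          · by_cases h4 : i + 1 = t
            · rw [hv, hv, if_neg h3, if_pos h4, if_neg h1, if_neg h2]
              rw [h4] at hstep
              omega
            · rw [hv, hv, if_neg h3, if_neg h4, if_neg h1, if_neg h2]
              exact hstep
    have hg'k : g' k = 0 := by
      rw [hv, if_neg (by omega), if_neg (by omega)]
      exact hgk
    have hsum' : ∑ i ∈ range k, g' i = ∑ i ∈ range k, f i := by
      have hSk := hS k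
      rw [if_pos (by omega), if_pos htltk] at hSk
      omega
    have hdom' : ∀ j, j ≤ k → ∑ i ∈ range j, g' i ≤ ∑ i ∈ range j, f i := by
      intro j hj
      have hSj := hS j
      by_cases h1 : s < j
      · by_cases h2 : t < j
        · rw [if_pos h1, if_pos h2] at hSj
          have := hdom j hj; omega
        · rw [if_pos h1, if_neg h2] at hSj
          have := hstrict j (by omega) (by omega); omega
      · rw [if_neg h1, if_neg (by omega)] at hSj
        have := hdom j hj; omega
    have hlt : (∑ j ∈ range (k+1), (∑ i ∈ range j, f i - ∑ i ∈ range j, g' i)) < D := by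
      rw [← hD]
      apply Finset.sum_lt_sum
      · intro j hj
        have hSj := hS j
        split_ifs at hSj <;> omega
      · refine ⟨s+1, mem_range.mpr (by omega), ?_⟩
        have hSj := hS (s+1)
        rw [if_pos (by omega), if_neg (by omega)] at hSj
        have := hstrict (s+1) le_rfl (by omega)
        have := hdom (s+1) (by omega)
        omega
    exact le_trans hkey (IH _ hlt g' hg'anti hg'k hsum' hdom' rfl)

lemma sum_range_getD (l : List ℕ) (j : ℕ) :
    ∑ i ∈ range j, l.getD i 0 = (l.take j).sum := by
  induction j with
  | zero => simp
  | succ j ih =>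
    rw [Finset.sum_range_succ, ih]
    by_cases h : j < l.length
    · rw [List.getD_eq_getElem _ _ h, List.sum_take_succ _ _ h]
    · push_neg at h
      rw [List.getD_eq_default _ _ h, List.take_of_length_le h,
          List.take_of_length_le (le_trans h (Nat.le_succ j)), add_zero]

lemma antitone_getD (l : List ℕ) (h : l.Pairwise (· ≥ ·)) : Antitone (fun i => l.getD i 0) := by
  apply antitone_nat_of_succ_le
  intro i
  by_cases hi : i + 1 < l.length
  · have hi' : i < l.length := by omega
    simp only [List.getD_eq_getElem _ _ hi, List.getD_eq_getElem _ _ hi']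
    exact h.rel_get_of_lt (a := ⟨i, hi'⟩) (b := ⟨i+1, hi⟩) (by simp)
  · simp only [List.getD_eq_default _ _ (by omega : l.length ≤ i + 1)]
    exact Nat.zero_le _

lemma sort_sum {n : ℕ} (p : Nat.Partition n) : (p.parts.sort (· ≥ ·)).sum = n := by
  have h := Multiset.sort_eq (s := p.parts) (r := (· ≥ ·))
  rw [← Multiset.sum_coe, h, p.parts_sum]

lemma sort_pos {n : ℕ} (p : Nat.Partition n) : ∀ x ∈ p.parts.sort (· ≥ ·), 0 < x := by
  intro x hx
  exact p.parts_pos ((Multiset.mem_sort _).mp hx)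

lemma cells_eq (k : ℕ) (l : List ℕ) (hsort : l.Pairwise (· ≥ ·)) (hlen : l.length ≤ k) :
    (YoungDiagram.ofRowLens l (List.sortedGE_iff_pairwise.mpr hsort)).cells =
      (range k).biUnion (fun i => (range (l.getD i 0)).map
        ⟨Prod.mk i, fun a b h => by simpa using h⟩) := by
  ext ⟨a, b⟩
  simp only [YoungDiagram.mem_cells, YoungDiagram.mem_ofRowLens, mem_biUnion, mem_range,
    Finset.mem_map, Function.Embedding.coeFn_mk]
  constructor
  · rintro ⟨h, hb⟩
    exact ⟨a, lt_of_lt_of_le h hlen, b, by rw [List.getD_eq_getElem _ _ h]; exact hb, rfl⟩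
  · rintro ⟨i, hik, c, hc, heq⟩
    obtain ⟨h1, h2⟩ : i = a ∧ c = b := Prod.ext_iff.mp heq
    subst h1
    subst h2
    by_cases h : i < l.length
    · rw [List.getD_eq_getElem _ _ h] at hc
      exact ⟨h, hc⟩
    · rw [List.getD_eq_default _ _ (by omega)] at hc
      omega

lemma prod_cells (k : ℕ) (l : List ℕ) (hsort : l.Pairwise (· ≥ ·)) (hlen : l.length ≤ k) :
    ∏ b ∈ (YoungDiagram.ofRowLens l (List.sortedGE_iff_pairwise.mpr hsort)).cells, ((k : ℤ) + b.2 - b.1) =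
      P k (fun i => l.getD i 0) := by
  rw [cells_eq k l hsort hlen]
  rw [Finset.prod_biUnion]
  · apply Finset.prod_congr rfl
    intro i _
    rw [Finset.prod_map]
    rfl
  · intro x _ y _ hxy
    simp only [Finset.disjoint_left]
    intro a ha hb
    simp only [Finset.mem_map, Function.Embedding.coeFn_mk] at ha hb
    obtain ⟨c, _, rfl⟩ := ha
    obtain ⟨d, _, he⟩ := hb
    obtain ⟨h1, h2⟩ : y = x ∧ d = c := Prod.ext_iff.mp he
    exact hxy h1.symm

lemma prod_cells_zero (k : ℕ) (l : List ℕ) (hsort : l.Pairwise (· ≥ ·)) (hlen : k < l.length)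
    (hpos : ∀ x ∈ l, 0 < x) :
    ∏ b ∈ (YoungDiagram.ofRowLens l (List.sortedGE_iff_pairwise.mpr hsort)).cells, ((k : ℤ) + b.2 - b.1) = 0 := by
  apply Finset.prod_eq_zero (i := (k, 0))
  · rw [YoungDiagram.mem_cells, YoungDiagram.mem_ofRowLens]
    exact ⟨hlen, hpos _ (l.getElem_mem hlen)⟩
  · simp

lemma length_le_of_take (k : ℕ) (l : List ℕ) (hpos : ∀ x ∈ l, 0 < x)
    (h : l.sum ≤ (l.take k).sum) : l.length ≤ k := by
  by_contra hc
  push_neg at hc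
  have hsplit : (l.take k).sum + (l.drop k).sum = l.sum := by
    rw [← List.sum_append, List.take_append_drop]
  have hne : l.drop k ≠ [] := by
    intro he
    have h2 := List.length_drop (i := k) (l := l)
    rw [he] at h2
    simp at h2
    omega
  obtain ⟨x, xs, he⟩ := List.exists_cons_of_ne_nil hne
  have hx : 0 < x := hpos x (List.mem_of_mem_drop (he ▸ List.mem_cons_self (a := x) (l := xs)))
  have hds : x ≤ (l.drop k).sum := by
    rw [he, List.sum_cons]
    omega
  omega

/-- Eigenvalue monotonicity for integer parameter: if `λ ⪰ μ` in dominance order and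
`k` is a positive integer, then `∏_b (k + c(b))` over boxes of `λ` is at least the same
product over boxes of `μ`, and both are nonnegative. -/
theorem stmt6 (n k : ℕ) (hk : 0 < k) (p q : Nat.Partition n) (hdom : Dominates p q) :
    (∏ b ∈ (toYD q).cells, ((k : ℤ) + b.2 - b.1)) ≤
      (∏ b ∈ (toYD p).cells, ((k : ℤ) + b.2 - b.1)) ∧
    0 ≤ ∏ b ∈ (toYD q).cells, ((k : ℤ) + b.2 - b.1) := by
  classical
  have hsump : (p.parts.sort (· ≥ ·)).sum = n := sort_sum p
  have hsumq : (q.parts.sort (· ≥ ·)).sum = n := sort_sum q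
  unfold Dominates at hdom
  unfold toYD
  set lp := p.parts.sort (· ≥ ·) with hlp
  set lq := q.parts.sort (· ≥ ·) with hlq
  have hsp : lp.Pairwise (· ≥ ·) := p.parts.pairwise_sort _
  have hsq : lq.Pairwise (· ≥ ·) := q.parts.pairwise_sort _
  by_cases hq : lq.length ≤ k
  · have htkq : (lq.take k).sum = n := by rw [List.take_of_length_le hq, hsumq]
    have hp : lp.length ≤ k := by
      apply length_le_of_take k lp (sort_pos p)
      have h1 := hdom k
      omega
    rw [prod_cells k lp (p.parts.pairwise_sort _) hp, prod_cells k lq (q.parts.pairwise_sort _) hq]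
    constructor
    · apply key k (fun i => lp.getD i 0) (antitone_getD lp hsp) _ (fun i => lq.getD i 0)
        (antitone_getD lq hsq)
      · exact List.getD_eq_default _ _ hq
      · rw [sum_range_getD, sum_range_getD, List.take_of_length_le hq,
          List.take_of_length_le hp, hsump, hsumq]
      · intro j hj
        rw [sum_range_getD, sum_range_getD]
        exact hdom j
      · rfl
    · exact le_of_lt (P_pos k _)
  · push_neg at hq
    rw [prod_cells_zero k lq (q.parts.pairwise_sort _) hq (sort_pos q)]
    refine ⟨?_, le_refl 0⟩
    by_cases hp : lp.length ≤ k
    · rw [prod_cells k lp (p.parts.pairwise_sort _) hp]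
      exact le_of_lt (P_pos k _)
    · push_neg at hp
      rw [prod_cells_zero k lp (p.parts.pairwise_sort _) hp (sort_pos p)]
end

section
/- For every partition λ of n with λ ≠ (n), the partition (n−1,1) dominates λ, and consequently for any θ > 1 the Ewens chain eigenvalue β_{(n−1,1)} = (θ−1)/(θ+n−1) is the second largest eigenvalue: β_{(n−1,1)} ≥ β_λ for all λ ⊢ n with λ ≠ (n). -/
open Finset

/-- the Ewens eigenvalue `β_λ = ∏_{i=1}^n (θ + c^λ(i))/(θ + i − 1)` of the partition
with Young diagram `Y`. -/
noncomputable def ewensEig (θ : ℝ) (n : ℕ) (Y : YoungDiagram) : ℝ :=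
  (∏ b ∈ Y.cells, (θ + b.2 - b.1)) / ∏ j ∈ Finset.range n, (θ + j)

/- ### Auxiliary lemmas -/

private lemma listSum_range_getD (l : List ℕ) :
    ∑ i ∈ Finset.range l.length, l.getD i 0 = l.sum := by
  induction l with
  | nil => simp
  | cons a t ih =>
    rw [List.length_cons, Finset.sum_range_succ']
    simp only [List.getD_cons_succ, List.getD_cons_zero]
    rw [ih, List.sum_cons, Nat.add_comm]

private lemma length_le_listSum {l : List ℕ} (h : ∀ x ∈ l, 0 < x) :
    l.length ≤ l.sum := by
  induction l with
  | nil => simp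
  | cons a t ih =>
    have h1 : 0 < a := h a (by simp)
    have h2 := ih fun x hx => h x (by simp [hx])
    simp only [List.length_cons, List.sum_cons]
    omega

private lemma takeSum_le (l : List ℕ) (j : ℕ) : (l.take j).sum ≤ l.sum := by
  conv_rhs => rw [← List.take_append_drop j l]
  rw [List.sum_append]
  exact Nat.le_add_right _ _

private lemma takeSum_mono (l : List ℕ) {i j : ℕ} (hij : i ≤ j) :
    (l.take i).sum ≤ (l.take j).sum := by
  have h : l.take i = (l.take j).take i := by rw [List.take_take, Nat.min_eq_left hij]
  rw [h]
  exact takeSum_le _ _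

private lemma mem_toYD {n : ℕ} (q : Nat.Partition n) (b : ℕ × ℕ) :
    b ∈ (toYD q).cells ↔
      b.1 < (q.parts.sort (· ≥ ·)).length ∧ b.2 < (q.parts.sort (· ≥ ·)).getD b.1 0 := by
  rw [YoungDiagram.mem_cells, toYD, YoungDiagram.mem_ofRowLens]
  constructor
  · rintro ⟨h, h2⟩
    exact ⟨h, by rwa [List.getD_eq_getElem _ _ h]⟩
  · rintro ⟨h, h2⟩
    exact ⟨h, by rwa [List.getD_eq_getElem _ _ h] at h2⟩

private lemma sortSum {n : ℕ} (q : Nat.Partition n) : (q.parts.sort (· ≥ ·)).sum = n := by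
  have h : (↑(q.parts.sort (· ≥ ·)) : Multiset ℕ) = q.parts := Multiset.sort_eq _ _
  calc (q.parts.sort (· ≥ ·)).sum = (↑(q.parts.sort (· ≥ ·)) : Multiset ℕ).sum :=
        (Multiset.sum_coe _).symm
    _ = q.parts.sum := by rw [h]
    _ = n := q.parts_sum

private lemma parts_lt {n : ℕ} (hn : 2 ≤ n) {q : Nat.Partition n}
    (hq : q ≠ Nat.Partition.indiscrete n) : ∀ x ∈ q.parts, x < n := by
  intro x hx
  by_contra h
  push_neg at h
  have hxle : x ≤ q.parts.sum := Multiset.single_le_sum (fun y _ => Nat.zero_le y) x hx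
  rw [q.parts_sum] at hxle
  have hxn : x = n := le_antisymm hxle h
  subst hxn
  have hcons : q.parts = x ::ₘ q.parts.erase x := (Multiset.cons_erase hx).symm
  have hsum : (q.parts.erase x).sum = 0 := by
    have := q.parts_sum
    rw [hcons, Multiset.sum_cons] at this
    omega
  have h0 : q.parts.erase x = 0 := by
    by_contra h0
    obtain ⟨y, hy⟩ := Multiset.exists_mem_of_ne_zero h0
    have hy' : 0 < y := q.parts_pos (Multiset.mem_of_mem_erase hy)
    have := Multiset.single_le_sum (fun z _ => Nat.zero_le z) y hy
    omega
  exact hq (Nat.Partition.ext (by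
    rw [hcons, h0, Nat.Partition.indiscrete_parts (by omega)]
    rfl))

/-- the target map: a bijection from the cells of `λ` onto `{-1, 0, …, n-2}` dominating
(in absolute-value sense) the contents. -/
private def fmap (L : List ℕ) (b : ℕ × ℕ) : ℤ :=
  if b.1 = 0 then (b.2 : ℤ)
  else if b.1 = 1 ∧ b.2 = 0 then -1
  else ((L.take b.1).sum : ℤ) + b.2 - 1

private lemma getD_mem {L : List ℕ} {i : ℕ} (h : i < L.length) : L.getD i 0 ∈ L := by
  rw [List.getD_eq_getElem _ _ h]
  exact List.getElem_mem h

private lemma take_one_sum {L : List ℕ} (h : 0 < L.length) :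
    (L.take 1).sum = L.getD 0 0 := by
  have := List.sum_take_succ L 0 h
  simp only [List.take_zero, List.sum_nil, Nat.zero_add] at this
  rw [this, List.getD_eq_getElem _ _ h]

private lemma take_succ_sum {L : List ℕ} {i : ℕ} (h : i < L.length) :
    (L.take (i + 1)).sum = (L.take i).sum + L.getD i 0 := by
  rw [List.sum_take_succ L i h, List.getD_eq_getElem _ _ h]

/-- basic inequalities in the generic branch -/
private lemma branch_facts {n : ℕ} {L : List ℕ}
    (hpos : ∀ x ∈ L, 0 < x) (hsum : L.sum = n)
    {i j : ℕ} (hi : i < L.length) (hj : j < L.getD i 0) :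
    i ≤ (L.take i).sum ∧ (L.take i).sum + j + 1 ≤ n := by
  constructor
  · have hlen : (L.take i).length = i := by
      rw [List.length_take]
      omega
    calc i = (L.take i).length := hlen.symm
      _ ≤ (L.take i).sum := length_le_listSum fun x hx => hpos x (List.mem_of_mem_take hx)
  · have h1 : (L.take i).sum + L.getD i 0 = (L.take (i + 1)).sum := (take_succ_sum hi).symm
    have h2 : (L.take (i + 1)).sum ≤ n := by rw [← hsum]; exact takeSum_le _ _
    omega

private lemma fmap_bounds {n : ℕ} (hn : 2 ≤ n) {L : List ℕ}
    (hpos : ∀ x ∈ L, 0 < x) (hsum : L.sum = n) (hlt : ∀ x ∈ L, x < n)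
    {b : ℕ × ℕ} (hb1 : b.1 < L.length) (hb2 : b.2 < L.getD b.1 0) :
    ((b.2 : ℤ) - b.1 ≤ fmap L b) ∧ ((b.1 : ℤ) - b.2 - 2 ≤ fmap L b) ∧
      (-1 : ℤ) ≤ fmap L b ∧ fmap L b ≤ (n : ℤ) - 2 := by
  obtain ⟨i, j⟩ := b
  simp only at hb1 hb2
  by_cases hi : i = 0
  · subst hi
    have h1 : L.getD 0 0 < n := hlt _ (getD_mem hb1)
    have hf : fmap L (0, j) = (j : ℤ) := rfl
    rw [hf]
    omega
  · by_cases hij : i = 1 ∧ j = 0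
    · obtain ⟨hi1, hj0⟩ := hij
      subst hi1; subst hj0
      have hf : fmap L (1, 0) = -1 := rfl
      rw [hf]
      omega
    · obtain ⟨hA, hB⟩ := branch_facts hpos hsum hb1 hb2
      have hf : fmap L (i, j) = ((L.take i).sum : ℤ) + j - 1 := by
        simp only [fmap, if_neg hi, if_neg hij]
      rw [hf]
      omega

/-- in the generic branch, `fmap` is at least `L.getD 0 0`. -/
private lemma fmap_generic_ge {L : List ℕ} (hpos : ∀ x ∈ L, 0 < x)
    {i j : ℕ} (hi : i < L.length) (hi0 : i ≠ 0) (hij : ¬(i = 1 ∧ j = 0)) :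
    (L.getD 0 0 : ℤ) ≤ ((L.take i).sum : ℤ) + j - 1 := by
  have h0 : 0 < L.length := by omega
  rcases Nat.lt_or_ge i 2 with h2 | h2
  · have hi1 : i = 1 := by omega
    subst hi1
    have hj1 : 1 ≤ j := by
      rcases Nat.eq_zero_or_pos j with h | h
      · exact absurd ⟨rfl, h⟩ hij
      · exact h
    have h1 := take_one_sum h0
    omega
  · have h1 : 1 < L.length := by omega
    have ht2 : (L.take 2).sum = L.getD 0 0 + L.getD 1 0 := by
      rw [take_succ_sum h1, take_one_sum h0]
    have hmono : (L.take 2).sum ≤ (L.take i).sum := takeSum_mono L h2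
    have hpos1 : 0 < L.getD 1 0 := hpos _ (getD_mem h1)
    omega

private lemma fmap_inj {L : List ℕ}
    (hpos : ∀ x ∈ L, 0 < x)
    {b b' : ℕ × ℕ} (hb1 : b.1 < L.length) (hb2 : b.2 < L.getD b.1 0)
    (hb1' : b'.1 < L.length) (hb2' : b'.2 < L.getD b'.1 0)
    (heq : fmap L b = fmap L b') : b = b' := by
  obtain ⟨i, j⟩ := b
  obtain ⟨i', j'⟩ := b'
  simp only at hb1 hb2 hb1' hb2'
  -- strict monotonicity in the generic branch
  have key : ∀ (a c a' c' : ℕ), a < L.length → c < L.getD a 0 → a' < L.length →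
      a < a' → ((L.take a).sum : ℤ) + c - 1 < ((L.take a').sum : ℤ) + c' - 1 := by
    intro a c a' c' ha hc ha' haa
    have h1 : (L.take (a + 1)).sum = (L.take a).sum + L.getD a 0 := take_succ_sum ha
    have h2 : (L.take (a + 1)).sum ≤ (L.take a').sum := takeSum_mono L (by omega)
    omega
  have hL0 : 0 < L.getD 0 0 := hpos _ (getD_mem (by omega))
  by_cases hi : i = 0 <;> by_cases hi' : i' = 0
  · subst hi; subst hi'
    have hf0 : fmap L (0, j) = (j : ℤ) := rfl
    have hf0' : fmap L (0, j') = (j' : ℤ) := rfl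
    rw [hf0, hf0'] at heq
    have : j = j' := by exact_mod_cast heq
    rw [this]
  · subst hi
    by_cases hij' : i' = 1 ∧ j' = 0
    · obtain ⟨h3, h4⟩ := hij'
      subst h3; subst h4
      have hf : fmap L (1, 0) = -1 := rfl
      have hf0 : fmap L (0, j) = (j : ℤ) := rfl
      rw [hf, hf0] at heq
      omega
    · have := fmap_generic_ge hpos hb1' hi' hij'
      have hf0 : fmap L (0, j) = (j : ℤ) := rfl
      have hf : fmap L (i', j') = ((L.take i').sum : ℤ) + j' - 1 := by
        simp only [fmap, if_neg hi', if_neg hij']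
      rw [hf, hf0] at heq
      have hjlt : j < L.getD 0 0 := hb2
      omega
  · subst hi'
    by_cases hij : i = 1 ∧ j = 0
    · obtain ⟨h3, h4⟩ := hij
      subst h3; subst h4
      have hf : fmap L (1, 0) = -1 := rfl
      have hf0 : fmap L (0, j') = (j' : ℤ) := rfl
      rw [hf, hf0] at heq
      omega
    · have := fmap_generic_ge hpos hb1 hi hij
      have hf0 : fmap L (0, j') = (j' : ℤ) := rfl
      have hf : fmap L (i, j) = ((L.take i).sum : ℤ) + j - 1 := by
        simp only [fmap, if_neg hi, if_neg hij]
      rw [hf, hf0] at heq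
      omega
  · by_cases hij : i = 1 ∧ j = 0 <;> by_cases hij' : i' = 1 ∧ j' = 0
    · obtain ⟨h1, h2⟩ := hij; obtain ⟨h3, h4⟩ := hij'
      subst h1; subst h2; subst h3; subst h4; rfl
    · obtain ⟨h3, h4⟩ := hij
      subst h3; subst h4
      have := fmap_generic_ge hpos hb1' hi' hij'
      have hf : fmap L (1, 0) = -1 := rfl
      have hf' : fmap L (i', j') = ((L.take i').sum : ℤ) + j' - 1 := by
        simp only [fmap, if_neg hi', if_neg hij']
      rw [hf, hf'] at heq
      have hL0' : 0 < L.getD 0 0 := hL0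
      omega
    · obtain ⟨h3, h4⟩ := hij'
      subst h3; subst h4
      have := fmap_generic_ge hpos hb1 hi hij
      have hf : fmap L (1, 0) = -1 := rfl
      have hf' : fmap L (i, j) = ((L.take i).sum : ℤ) + j - 1 := by
        simp only [fmap, if_neg hi, if_neg hij]
      rw [hf', hf] at heq
      omega
    · have hf : fmap L (i, j) = ((L.take i).sum : ℤ) + j - 1 := by
        simp only [fmap, if_neg hi, if_neg hij]
      have hf' : fmap L (i', j') = ((L.take i').sum : ℤ) + j' - 1 := by
        simp only [fmap, if_neg hi', if_neg hij']
      rw [hf, hf'] at heq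
      rcases Nat.lt_trichotomy i i' with h | h | h
      · exact absurd heq (ne_of_lt (key i j i' j' hb1 hb2 hb1' h))
      · subst h
        have : j = j' := by omega
        rw [this]
      · exact absurd heq.symm (ne_of_lt (key i' j' i j hb1' hb2' hb1 h))

private lemma card_toYD {n : ℕ} (q : Nat.Partition n) : (toYD q).cells.card = n := by
  set L := q.parts.sort (· ≥ ·) with hL
  have hsum : L.sum = n := sortSum q
  have hcells : (toYD q).cells =
      (Finset.range L.length).biUnion (fun i => (toYD q).row i) := by
    ext b
    simp only [Finset.mem_biUnion, Finset.mem_range, YoungDiagram.mem_row_iff]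
    constructor
    · intro hb
      exact ⟨b.1, ((mem_toYD q b).mp hb).1, (YoungDiagram.mem_cells _).mp hb, rfl⟩
    · rintro ⟨i, _, hb, rfl⟩
      exact (YoungDiagram.mem_cells _).mpr hb
  rw [hcells, Finset.card_biUnion]
  · have hrl : ∀ i ∈ Finset.range L.length, ((toYD q).row i).card = L.getD i 0 := by
      intro i hi
      rw [Finset.mem_range] at hi
      rw [← YoungDiagram.rowLen_eq_card]
      have := YoungDiagram.rowLen_ofRowLens (w := L) (hw := List.sortedGE_iff_pairwise.mpr (q.parts.pairwise_sort (· ≥ ·))) ⟨i, hi⟩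
      rw [toYD]
      rw [this, List.getD_eq_getElem _ _ hi]
      rfl
    rw [Finset.sum_congr rfl hrl, listSum_range_getD, hsum]
  · intro x _ y _ hxy
    simp only [Finset.disjoint_left]
    intro c hc hc'
    rw [YoungDiagram.mem_row_iff] at hc hc'
    exact hxy (hc.2 ▸ hc'.2.symm ▸ rfl)

private lemma image_fmap {n : ℕ} (hn : 2 ≤ n) (q : Nat.Partition n)
    (hlt : ∀ x ∈ q.parts, x < n) :
    (toYD q).cells.image (fmap (q.parts.sort (· ≥ ·))) = Finset.Icc (-1 : ℤ) ((n : ℤ) - 2) := by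
  set L := q.parts.sort (· ≥ ·) with hL
  have hpos : ∀ x ∈ L, 0 < x := fun x hx => q.parts_pos (Multiset.mem_sort _ |>.mp hx)
  have hsum : L.sum = n := sortSum q
  have hlt' : ∀ x ∈ L, x < n := fun x hx => hlt x (Multiset.mem_sort _ |>.mp hx)
  apply Finset.eq_of_subset_of_card_le
  · intro m hm
    rw [Finset.mem_image] at hm
    obtain ⟨b, hb, rfl⟩ := hm
    obtain ⟨hb1, hb2⟩ := (mem_toYD q b).mp hb
    obtain ⟨_, _, h3, h4⟩ := fmap_bounds hn hpos hsum hlt' hb1 hb2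
    rw [Finset.mem_Icc]
    exact ⟨h3, h4⟩
  · rw [Int.card_Icc]
    rw [Finset.card_image_of_injOn]
    · rw [card_toYD]
      omega
    · intro b hb b' hb' heq
      obtain ⟨hb1, hb2⟩ := (mem_toYD q b).mp hb
      obtain ⟨hb1', hb2'⟩ := (mem_toYD q b').mp hb'
      exact fmap_inj hpos hb1 hb2 hb1' hb2' heq

private lemma prod_Icc_eq (θ : ℝ) {n : ℕ} (hn : 2 ≤ n) :
    ∏ m ∈ Finset.Icc (-1 : ℤ) ((n : ℤ) - 2), (θ + m) =
      (θ - 1) * ∏ j ∈ Finset.range (n - 1), (θ + j) := by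
  have h1 : Finset.Icc (-1 : ℤ) ((n : ℤ) - 2) =
      insert (-1 : ℤ) ((Finset.range (n - 1)).image (fun j : ℕ => (j : ℤ))) := by
    ext m
    simp only [Finset.mem_Icc, Finset.mem_insert, Finset.mem_image, Finset.mem_range]
    constructor
    · rintro ⟨h, h2⟩
      by_cases hm : m = -1
      · exact Or.inl hm
      · exact Or.inr ⟨m.toNat, by omega, by omega⟩
    · rintro (rfl | ⟨j, hj, rfl⟩) <;> omega
  rw [h1, Finset.prod_insert (by simp only [Finset.mem_image, Finset.mem_range]; rintro ⟨j, _, h⟩; omega),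
    Finset.prod_image (by intro x _ y _ h; exact Nat.cast_injective (R := ℤ) h)]
  refine congrArg₂ (· * ·) (by push_cast; ring)
    (Finset.prod_congr rfl fun j _ => by push_cast; ring)

private lemma numer_le {n : ℕ} (hn : 2 ≤ n) {θ : ℝ} (hθ : 1 < θ) (q : Nat.Partition n)
    (hlt : ∀ x ∈ q.parts, x < n) :
    ∏ b ∈ (toYD q).cells, (θ + b.2 - b.1) ≤
      (θ - 1) * ∏ j ∈ Finset.range (n - 1), (θ + j) := by
  set L := q.parts.sort (· ≥ ·) with hL
  have hpos : ∀ x ∈ L, 0 < x := fun x hx => q.parts_pos (Multiset.mem_sort _ |>.mp hx)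
  have hsum : L.sum = n := sortSum q
  have hlt' : ∀ x ∈ L, x < n := fun x hx => hlt x (Multiset.mem_sort _ |>.mp hx)
  have step2 : ∏ b ∈ (toYD q).cells, (θ + b.2 - b.1) ≤
      ∏ b ∈ (toYD q).cells, (θ + (fmap L b : ℝ)) := by
    calc ∏ b ∈ (toYD q).cells, (θ + b.2 - b.1)
        ≤ |∏ b ∈ (toYD q).cells, (θ + b.2 - b.1)| := le_abs_self _
      _ = ∏ b ∈ (toYD q).cells, |θ + b.2 - b.1| := Finset.abs_prod _ _
      _ ≤ ∏ b ∈ (toYD q).cells, (θ + (fmap L b : ℝ)) := by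
          apply Finset.prod_le_prod (fun b _ => abs_nonneg _)
          intro b hb
          obtain ⟨hb1, hb2⟩ := (mem_toYD q b).mp hb
          obtain ⟨h1, h2, _, _⟩ := fmap_bounds hn hpos hsum hlt' hb1 hb2
          have h1' : (b.2 : ℝ) - b.1 ≤ (fmap L b : ℝ) := by exact_mod_cast h1
          have h2' : (b.1 : ℝ) - b.2 - 2 ≤ (fmap L b : ℝ) := by exact_mod_cast h2
          rw [abs_le]
          constructor <;> nlinarith
  calc ∏ b ∈ (toYD q).cells, (θ + b.2 - b.1)
      ≤ ∏ b ∈ (toYD q).cells, (θ + (fmap L b : ℝ)) := step2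
    _ = ∏ m ∈ Finset.Icc (-1 : ℤ) ((n : ℤ) - 2), (θ + m) := by
        rw [← image_fmap hn q hlt, Finset.prod_image]
        intro b hb b' hb' heq
        obtain ⟨hb1, hb2⟩ := (mem_toYD q b).mp hb
        obtain ⟨hb1', hb2'⟩ := (mem_toYD q b').mp hb'
        exact fmap_inj hpos hb1 hb2 hb1' hb2' heq
    _ = (θ - 1) * ∏ j ∈ Finset.range (n - 1), (θ + j) := prod_Icc_eq θ hn

/-- The partition `(n−1,1)` dominates every partition of `n` other than `(n)`, and
consequently for `θ > 1` the eigenvalue `β_{(n−1,1)} = (θ−1)/(θ+n−1)` is the second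
largest Ewens eigenvalue. -/
theorem stmt7 (n : ℕ) (hn : 2 ≤ n) (θ : ℝ) (hθ : 1 < θ)
    (p : Nat.Partition n) (hp : p.parts = {n - 1, 1}) :
    (∀ q : Nat.Partition n, q ≠ Nat.Partition.indiscrete n → Dominates p q) ∧
    ewensEig θ n (toYD p) = (θ - 1) / (θ + n - 1) ∧
    (∀ q : Nat.Partition n, q ≠ Nat.Partition.indiscrete n →
      ewensEig θ n (toYD q) ≤ ewensEig θ n (toYD p)) := by
  have hsort : p.parts.sort (· ≥ ·) = [n - 1, 1] := by
    apply fun h1 h2 h3 => List.Perm.eq_of_pairwise' (r := fun a b : ℕ => a ≥ b) h2 h3 h1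
    · apply Multiset.coe_eq_coe.mp
      rw [Multiset.sort_eq, hp]
      rfl
    · exact p.parts.pairwise_sort _
    · refine List.pairwise_cons.mpr ⟨?_, List.pairwise_singleton _ 1⟩
      intro b hb
      simp at hb
      omega
  -- cells of toYD p
  have hcells : (toYD p).cells =
      insert ((1, 0) : ℕ × ℕ) ((Finset.range (n - 1)).image (fun j => (0, j))) := by
    ext b
    obtain ⟨i, j⟩ := b
    rw [mem_toYD, hsort]
    simp only [Finset.mem_insert, Finset.mem_image, Finset.mem_range, Prod.mk.injEq]
    constructor
    · rintro ⟨hi, hj⟩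
      rcases i with _ | _ | i
      · right
        refine ⟨j, ?_, rfl, rfl⟩
        simpa using hj
      · left
        have hj1 : j < 1 := by simpa using hj
        exact ⟨rfl, by omega⟩
      · simp only [List.length_cons, List.length_nil] at hi
        omega
    · rintro (⟨h1, h2⟩ | ⟨j', hj', h1, h2⟩)
      · subst h1; subst h2
        exact ⟨by simp, by simp⟩
      · subst h1; subst h2
        exact ⟨by simp, by simpa using hj'⟩
  have hnotmem : ((1, 0) : ℕ × ℕ) ∉ (Finset.range (n - 1)).image (fun j => ((0, j) : ℕ × ℕ)) := by
    simp only [Finset.mem_image, Finset.mem_range, Prod.mk.injEq]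
    rintro ⟨j, _, h, _⟩
    exact absurd h.symm one_ne_zero
  have hNp : ∏ b ∈ (toYD p).cells, (θ + b.2 - b.1) =
      (θ - 1) * ∏ j ∈ Finset.range (n - 1), (θ + j) := by
    rw [hcells, Finset.prod_insert hnotmem,
      Finset.prod_image (by intro x _ y _ h; simpa using h)]
    simp only [Nat.cast_zero, Nat.cast_one]
    congr 1
    · ring
    · exact Finset.prod_congr rfl fun j _ => by ring
  have hPpos : (0 : ℝ) < ∏ j ∈ Finset.range (n - 1), (θ + j) := by
    apply Finset.prod_pos
    intro j _
    positivity
  have hcast : ((n - 1 : ℕ) : ℝ) = (n : ℝ) - 1 := by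
    rw [Nat.cast_sub (by omega : 1 ≤ n), Nat.cast_one]
  have hdenom : ∏ j ∈ Finset.range n, (θ + j) =
      (∏ j ∈ Finset.range (n - 1), (θ + j)) * (θ + n - 1) := by
    have h : ∏ j ∈ Finset.range ((n - 1) + 1), (θ + j) =
        (∏ j ∈ Finset.range (n - 1), (θ + j)) * (θ + ((n - 1 : ℕ) : ℝ)) :=
      Finset.prod_range_succ _ _
    rw [Nat.sub_add_cancel (by omega : 1 ≤ n)] at h
    rw [h, hcast]
    ring
  have hθn : (0 : ℝ) < θ + n - 1 := by
    have : (0 : ℝ) ≤ (n : ℝ) := Nat.cast_nonneg n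
    linarith
  have hpart2 : ewensEig θ n (toYD p) = (θ - 1) / (θ + n - 1) := by
    rw [ewensEig, hNp, hdenom, mul_comm (∏ j ∈ Finset.range (n - 1), (θ + j)) (θ + n - 1)]
    exact mul_div_mul_right _ _ hPpos.ne'
  refine ⟨?_, hpart2, ?_⟩
  · -- dominance
    intro q hq j
    rw [hsort]
    have hlt := parts_lt hn hq
    have hsum : (q.parts.sort (· ≥ ·)).sum = n := sortSum q
    match j with
    | 0 => simp
    | 1 =>
      have hR : (([n - 1, 1] : List ℕ).take 1).sum = n - 1 := by simp
      rw [hR]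
      rcases hE : q.parts.sort (· ≥ ·) with _ | ⟨a, t⟩
      · simp
      · have ha : a < n := hlt a (Multiset.mem_sort _ |>.mp
          (by rw [hE]; exact List.mem_cons_self))
        have hL : ((a :: t).take 1).sum = a := by simp
        rw [hL]
        omega
    | (j + 2) =>
      have h2 : (([n - 1, 1] : List ℕ).take (j + 2)) = [n - 1, 1] :=
        List.take_of_length_le (by simp)
      have hR : (([n - 1, 1] : List ℕ)).sum = n - 1 + 1 := by simp
      rw [h2, hR]
      have := takeSum_le (q.parts.sort (· ≥ ·)) (j + 2)
      rw [hsum] at this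
      omega
  · -- eigenvalue bound
    intro q hq
    rw [hpart2, ← hpart2, ewensEig, ewensEig, hNp]
    apply div_le_div_of_nonneg_right _ (le_of_lt (by rw [hdenom]; positivity))
    exact numer_le hn hθ q (parts_lt hn hq)
end

section
/- For partitions λ of n with first part λ_1 fixed, the sum of squared dimensions of the corresponding irreducible representations of S_n satisfies Σ_{λ: λ has first row λ_1} d_λ² ≤ C(n, λ_1)² · (n − λ_1)!, where C(n,λ_1) is the binomial coefficient. -/
open Finset

/-- largest part of a partition -/
def firstPart {n : ℕ} (p : Nat.Partition n) : ℕ := (p.parts.sort (· ≥ ·)).headI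

/-- number of standard Young tableaux of shape `Y` (the dimension `d_λ`) -/
def sytCard (Y : YoungDiagram) : ℕ :=
  Fintype.card {f : (↥Y.cells) ≃ Fin Y.cells.card //
    (∀ a b : Y.cells, (a : ℕ × ℕ).1 = (b : ℕ × ℕ).1 → (a : ℕ × ℕ).2 < (b : ℕ × ℕ).2 →
      f a < f b) ∧
    (∀ a b : Y.cells, (a : ℕ × ℕ).2 = (b : ℕ × ℕ).2 → (a : ℕ × ℕ).1 < (b : ℕ × ℕ).1 →
      f a < f b)}



namespace SYTAux

/-- A removable corner of a Young diagram. -/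
def IsCorner (Y : YoungDiagram) (c : ℕ × ℕ) : Prop :=
  c ∈ Y ∧ (c.1 + 1, c.2) ∉ Y ∧ (c.1, c.2 + 1) ∉ Y

/-- An addable cell of a Young diagram. -/
def IsAddable (Y : YoungDiagram) (c : ℕ × ℕ) : Prop :=
  c ∉ Y ∧ (c.1 = 0 ∨ (c.1 - 1, c.2) ∈ Y) ∧ (c.2 = 0 ∨ (c.1, c.2 - 1) ∈ Y)

instance (Y : YoungDiagram) (c : ℕ × ℕ) : Decidable (IsCorner Y c) := by
  unfold IsCorner; infer_instance

instance (Y : YoungDiagram) (c : ℕ × ℕ) : Decidable (IsAddable Y c) := by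
  unfold IsAddable; infer_instance

lemma le_lower {Y : YoungDiagram} {x y : ℕ × ℕ} (hxy : x ≤ y) (hy : y ∈ Y) : x ∈ Y :=
  Y.isLowerSet hxy hy

/-- Adding an addable cell gives a Young diagram. -/
def addCell (Y : YoungDiagram) (c : ℕ × ℕ) (h : IsAddable Y c) : YoungDiagram where
  cells := insert c Y.cells
  isLowerSet := by
    rintro ⟨a, b⟩ ⟨p, q⟩ ⟨hp, hq⟩ hab
    simp only [Finset.coe_insert, Set.mem_insert_iff, Finset.mem_coe, YoungDiagram.mem_cells]
      at hab ⊢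
    rcases hab with hab | hab
    · subst hab
      simp only at hp hq
      by_cases hpc : p = (a, b).1
      · by_cases hqc : q = (a, b).2
        · left; rw [Prod.ext_iff]; exact ⟨hpc, hqc⟩
        · right
          have h1 : (a, b).2 ≠ 0 := by simp at hqc ⊢; omega
          have := h.2.2.resolve_left h1
          exact le_lower (by constructor <;> simp <;> omega) this
      · right
        have h1 : (a, b).1 ≠ 0 := by simp at hpc ⊢; omega
        have := h.2.1.resolve_left h1
        exact le_lower (by constructor <;> simp <;> omega) this
    · right; exact le_lower ⟨hp, hq⟩ hab

/-- Erasing a corner gives a Young diagram. -/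
def eraseCell (Y : YoungDiagram) (c : ℕ × ℕ) (h : IsCorner Y c) : YoungDiagram where
  cells := Y.cells.erase c
  isLowerSet := by
    rintro ⟨a, b⟩ ⟨p, q⟩ ⟨hp, hq⟩ hab
    simp only [Finset.coe_erase, Set.mem_diff, Finset.mem_coe, YoungDiagram.mem_cells,
      Set.mem_singleton_iff] at hab ⊢
    refine ⟨le_lower ⟨hp, hq⟩ hab.1, ?_⟩
    rintro rfl
    rcases lt_or_eq_of_le hp with hp' | rfl
    · exact h.2.1 (le_lower (by constructor <;> simp <;> omega) hab.1)
    · rcases lt_or_eq_of_le hq with hq' | rfl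
      · exact h.2.2 (le_lower (by constructor <;> simp <;> omega) hab.1)
      · exact hab.2 rfl

@[simp] lemma mem_addCell {Y : YoungDiagram} {c x : ℕ × ℕ} (h : IsAddable Y c) :
    x ∈ addCell Y c h ↔ x = c ∨ x ∈ Y := by
  change x ∈ insert c Y.cells ↔ _
  simp [YoungDiagram.mem_cells, Finset.mem_insert]

@[simp] lemma mem_eraseCell {Y : YoungDiagram} {c x : ℕ × ℕ} (h : IsCorner Y c) :
    x ∈ eraseCell Y c h ↔ x ≠ c ∧ x ∈ Y := by
  change x ∈ Y.cells.erase c ↔ _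
  simp [YoungDiagram.mem_cells, Finset.mem_erase]

/-- The covering relation. -/
def Cov (X Y : YoungDiagram) : Prop := X ≤ Y ∧ Y.card = X.card + 1

lemma cov_addCell {Y : YoungDiagram} {c : ℕ × ℕ} (h : IsAddable Y c) :
    Cov Y (addCell Y c h) := by
  constructor
  · intro x hx
    rw [mem_addCell]; right; exact hx
  · show (insert c Y.cells).card = Y.cells.card + 1
    rw [Finset.card_insert_of_notMem (by simpa using h.1)]

lemma cov_eraseCell {Y : YoungDiagram} {c : ℕ × ℕ} (h : IsCorner Y c) :
    Cov (eraseCell Y c h) Y := by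
  constructor
  · intro x hx
    simp only [YoungDiagram.mem_cells, mem_eraseCell] at hx ⊢
    exact hx.2
  · show Y.cells.card = (Y.cells.erase c).card + 1
    rw [Finset.card_erase_of_mem (by simpa using h.1)]
    have : 0 < Y.cells.card := Finset.card_pos.2 ⟨c, by simpa using h.1⟩
    omega

lemma cov_exists_corner {X Y : YoungDiagram} (h : Cov X Y) :
    ∃ c, ∃ hc : IsCorner Y c, ∃ ha : IsAddable X c,
      X = eraseCell Y c hc ∧ Y = addCell X c ha := by
  obtain ⟨hle, hcard⟩ := h
  have hsub : X.cells ⊆ Y.cells := YoungDiagram.cells_subset_iff.2 hle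
  have hd : (Y.cells \ X.cells).card = 1 := by
    have h2 : Y.cells.card = X.cells.card + 1 := hcard
    rw [Finset.card_sdiff_of_subset hsub]; omega
  obtain ⟨c, hc⟩ := Finset.card_eq_one.1 hd
  have hcY : c ∈ Y := by
    have : c ∈ Y.cells \ X.cells := hc ▸ Finset.mem_singleton_self c
    simpa using (Finset.mem_sdiff.1 this).1
  have hcX : c ∉ X := by
    have : c ∈ Y.cells \ X.cells := hc ▸ Finset.mem_singleton_self c
    simpa using (Finset.mem_sdiff.1 this).2
  have hmem : ∀ x, x ∈ Y ↔ x = c ∨ x ∈ X := by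
    intro x
    constructor
    · intro hx
      by_cases hxX : x ∈ X
      · right; exact hxX
      · left
        have : x ∈ Y.cells \ X.cells := Finset.mem_sdiff.2 ⟨by simpa using hx, by simpa using hxX⟩
        rw [hc] at this; simpa using this
    · rintro (rfl | hx)
      · exact hcY
      · exact hle hx
  have hcorner : IsCorner Y c := by
    refine ⟨hcY, fun hmem1 => ?_, fun hmem2 => ?_⟩
    · have : (c.1 + 1, c.2) ∈ X := by
        rcases (hmem _).1 hmem1 with h' | h'
        · exfalso; exact absurd (congrArg Prod.fst h') (by simp)
        · exact h'
      exact hcX (le_lower (by constructor <;> simp) this)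
    · have : (c.1, c.2 + 1) ∈ X := by
        rcases (hmem _).1 hmem2 with h' | h'
        · exfalso; exact absurd (congrArg Prod.snd h') (by simp)
        · exact h'
      exact hcX (le_lower (by constructor <;> simp) this)
  have haddable : IsAddable X c := by
    refine ⟨hcX, ?_, ?_⟩
    · rcases Nat.eq_zero_or_pos c.1 with h0 | h0
      · left; exact h0
      · right
        have hY' : (c.1 - 1, c.2) ∈ Y := le_lower (by constructor <;> simp <;> omega) hcY
        rcases (hmem _).1 hY' with h' | h'
        · exfalso; have := congrArg Prod.fst h'; simp at this; omega
        · exact h'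
    · rcases Nat.eq_zero_or_pos c.2 with h0 | h0
      · left; exact h0
      · right
        have hY' : (c.1, c.2 - 1) ∈ Y := le_lower (by constructor <;> simp <;> omega) hcY
        rcases (hmem _).1 hY' with h' | h'
        · exfalso; have := congrArg Prod.snd h'; simp at this; omega
        · exact h'
  refine ⟨c, hcorner, haddable, ?_, ?_⟩
  · ext x
    rw [YoungDiagram.mem_cells, YoungDiagram.mem_cells, mem_eraseCell]
    constructor
    · intro hx
      refine ⟨fun h' => hcX (h' ▸ hx), hle hx⟩
    · rintro ⟨hne, hx⟩
      rcases (hmem x).1 hx with rfl | h'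
      · exact absurd rfl hne
      · exact h'
  · ext x
    rw [YoungDiagram.mem_cells, YoungDiagram.mem_cells, mem_addCell, hmem]

end SYTAux

namespace SYTAux

open YoungDiagram

/-- Finset of corners. -/
def corners (Y : YoungDiagram) : Finset (ℕ × ℕ) := Y.cells.filter (fun c => IsCorner Y c)

@[simp] lemma mem_corners {Y : YoungDiagram} {c : ℕ × ℕ} :
    c ∈ corners Y ↔ IsCorner Y c := by
  simp only [corners, Finset.mem_filter, YoungDiagram.mem_cells]
  exact ⟨fun h => h.2, fun h => ⟨h.1, h⟩⟩

lemma addable_eq_colLen {Y : YoungDiagram} {c : ℕ × ℕ} (h : IsAddable Y c) :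
    c.1 = Y.colLen c.2 := by
  have h1 : ¬ c.1 < Y.colLen c.2 := by
    rw [← YoungDiagram.mem_iff_lt_colLen]
    exact fun hm => h.1 (by cases c; exact hm)
  rcases h.2.1 with h0 | h0
  · omega
  · have : c.1 - 1 < Y.colLen c.2 := YoungDiagram.mem_iff_lt_colLen.1 (by cases c; exact h0)
    omega

/-- Finset of addable cells. -/
def addables (Y : YoungDiagram) : Finset (ℕ × ℕ) :=
  ((Finset.range (Y.rowLen 0 + 1)).image (fun j => (Y.colLen j, j))).filter (fun c => IsAddable Y c)

@[simp] lemma mem_addables {Y : YoungDiagram} {c : ℕ × ℕ} :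
    c ∈ addables Y ↔ IsAddable Y c := by
  simp only [addables, Finset.mem_filter, Finset.mem_image, Finset.mem_range]
  constructor
  · exact fun h => h.2
  · intro h
    refine ⟨⟨c.2, ?_, ?_⟩, h⟩
    · -- c.2 ≤ rowLen 0
      rcases h.2.2 with h0 | h0
      · omega
      · have : (0, c.2 - 1) ∈ Y := le_lower (by constructor <;> simp) h0
        rw [YoungDiagram.mem_iff_lt_rowLen] at this
        omega
    · rw [← addable_eq_colLen h]

lemma addable_unique_col {Y : YoungDiagram} {c c' : ℕ × ℕ} (h : IsAddable Y c)
    (h' : IsAddable Y c') (hcol : c.2 = c'.2) : c = c' := by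
  obtain ⟨a, b⟩ := c
  obtain ⟨a', b'⟩ := c'
  simp only at hcol
  subst hcol
  have h1 := addable_eq_colLen h
  have h2 := addable_eq_colLen h'
  simp only at h1 h2
  rw [Prod.ext_iff]
  exact ⟨by omega, rfl⟩

/-- Key inequality: the number of addable cells is at most the number of corners plus one. -/
lemma card_addables_le (Y : YoungDiagram) :
    (addables Y).card ≤ (corners Y).card + 1 := by
  have key : ((addables Y).erase (Y.colLen 0, 0)).card ≤ (corners Y).card := by
    apply Finset.card_le_card_of_injOn (fun c => (Y.colLen (c.2 - 1) - 1, c.2 - 1))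
    · intro c hc
      simp only [Finset.mem_coe] at hc ⊢
      rw [Finset.mem_erase, mem_addables] at hc
      obtain ⟨hne, hadd⟩ := hc
      have hc2 : c.2 ≠ 0 := by
        intro h0
        apply hne
        have := addable_eq_colLen hadd
        rw [Prod.ext_iff]
        constructor
        · simpa [h0] using this
        · simpa using h0
      have hmem : (c.1, c.2 - 1) ∈ Y := hadd.2.2.resolve_left hc2
      have hpos : c.1 < Y.colLen (c.2 - 1) := by
        rw [← YoungDiagram.mem_iff_lt_colLen]; exact hmem
      have hcl : Y.colLen c.2 ≤ c.1 := by
        have := addable_eq_colLen hadd; omega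
      rw [mem_corners]
      refine ⟨?_, ?_, ?_⟩
      · rw [YoungDiagram.mem_iff_lt_colLen]; simp; omega
      · simp only
        rw [YoungDiagram.mem_iff_lt_colLen]
        omega
      · simp only
        rw [YoungDiagram.mem_iff_lt_colLen]
        have h1 : c.2 - 1 + 1 = c.2 := by omega
        rw [h1]
        omega
    · intro c hc c' hc' heq
      simp only [Finset.mem_coe, Finset.mem_erase, mem_addables] at hc hc'
      have h2 : c.2 - 1 = c'.2 - 1 := congrArg Prod.snd heq
      have hc2 : c.2 ≠ 0 := by
        intro h0
        apply hc.1
        have := addable_eq_colLen hc.2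
        rw [Prod.ext_iff]
        exact ⟨by simpa [h0] using this, by simpa using h0⟩
      have hc2' : c'.2 ≠ 0 := by
        intro h0
        apply hc'.1
        have := addable_eq_colLen hc'.2
        rw [Prod.ext_iff]
        exact ⟨by simpa [h0] using this, by simpa using h0⟩
      exact addable_unique_col hc.2 hc'.2 (by omega)
  calc (addables Y).card ≤ ((addables Y).erase (Y.colLen 0, 0)).card + 1 := by
        rcases Finset.decidableMem (Y.colLen 0, 0) (addables Y) with h | h
        · rw [Finset.erase_eq_of_notMem h]; omega
        · rw [Finset.card_erase_of_mem h]
          have : 0 < (addables Y).card := Finset.card_pos.2 ⟨_, h⟩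
          omega
    _ ≤ (corners Y).card + 1 := by omega

instance : DecidableEq YoungDiagram :=
  fun X Y => decidable_of_iff (X.cells = Y.cells) (by rw [YoungDiagram.ext_iff])

/-- Predecessors (diagrams covered by `Y`). -/
def preds (Y : YoungDiagram) : Finset YoungDiagram :=
  (corners Y).attach.image (fun c => eraseCell Y c.1 (mem_corners.1 c.2))

/-- Successors (diagrams covering `Y`). -/
def succs (Y : YoungDiagram) : Finset YoungDiagram :=
  (addables Y).attach.image (fun c => addCell Y c.1 (mem_addables.1 c.2))

lemma mem_preds {X Y : YoungDiagram} : X ∈ preds Y ↔ Cov X Y := by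
  constructor
  · intro h
    simp only [preds, Finset.mem_image, Finset.mem_attach, true_and, Subtype.exists] at h
    obtain ⟨c, hc, rfl⟩ := h
    exact cov_eraseCell _
  · intro h
    obtain ⟨c, hc, ha, rfl, -⟩ := cov_exists_corner h
    simp only [preds, Finset.mem_image, Finset.mem_attach, true_and, Subtype.exists]
    exact ⟨c, mem_corners.2 hc, rfl⟩

lemma mem_succs {X Y : YoungDiagram} : Y ∈ succs X ↔ Cov X Y := by
  constructor
  · intro h
    simp only [succs, Finset.mem_image, Finset.mem_attach, true_and, Subtype.exists] at h
    obtain ⟨c, hc, rfl⟩ := h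
    exact cov_addCell _
  · intro h
    obtain ⟨c, hc, ha, -, rfl⟩ := cov_exists_corner h
    simp only [succs, Finset.mem_image, Finset.mem_attach, true_and, Subtype.exists]
    exact ⟨c, mem_addables.2 ha, rfl⟩

lemma card_preds (Y : YoungDiagram) : (preds Y).card = (corners Y).card := by
  rw [preds, Finset.card_image_of_injOn, Finset.card_attach]
  intro c _ c' _ heq
  simp only at heq
  have h1 : ∀ x, x ∈ eraseCell Y c.1 (mem_corners.1 c.2) ↔
      x ∈ eraseCell Y c'.1 (mem_corners.1 c'.2) := by
    intro x; rw [heq]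
  have hc := mem_corners.1 c.2
  have hc' := mem_corners.1 c'.2
  ext1
  by_contra hne
  have hne' : c'.1 ≠ c.1 := fun h => hne (h.symm)
  have h2 := (h1 c'.1).1
  rw [mem_eraseCell, mem_eraseCell] at h2
  have := h2 ⟨hne', hc'.1⟩
  exact this.1 rfl

lemma card_succs (Y : YoungDiagram) : (succs Y).card = (addables Y).card := by
  rw [succs, Finset.card_image_of_injOn, Finset.card_attach]
  intro c _ c' _ heq
  simp only at heq
  have h1 : ∀ x, x ∈ addCell Y c.1 (mem_addables.1 c.2) ↔
      x ∈ addCell Y c'.1 (mem_addables.1 c'.2) := by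
    intro x; rw [heq]
  have hc := mem_addables.1 c.2
  have hc' := mem_addables.1 c'.2
  have h2 := (h1 c.1).1
  rw [mem_addCell, mem_addCell] at h2
  ext1
  rcases h2 (Or.inl rfl) with h | h
  · exact h
  · exact absurd h hc.1

lemma card_succs_le (Y : YoungDiagram) : (succs Y).card ≤ (preds Y).card + 1 := by
  rw [card_succs, card_preds]; exact card_addables_le Y

lemma cov_card {X Y : YoungDiagram} (h : Cov X Y) : Y.card = X.card + 1 := h.2

end SYTAux

namespace SYTAux

/-- The finset of saturated chains from `⊥` to `Y`, as lists (top first). -/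
def chainsF : ℕ → YoungDiagram → Finset (List YoungDiagram)
  | 0, Y => if Y = ⊥ then {[Y]} else ∅
  | (m + 1), Y => (preds Y).biUnion (fun X => (chainsF m X).image (fun l => Y :: l))

/-- The number of saturated chains from `⊥` to `Y` (= number of SYT of shape `Y`). -/
def dd (m : ℕ) (Y : YoungDiagram) : ℕ := (chainsF m Y).card

lemma chainsF_head {m : ℕ} {Y : YoungDiagram} {l : List YoungDiagram}
    (h : l ∈ chainsF m Y) : ∃ t, l = Y :: t := by
  cases m with
  | zero =>
    simp only [chainsF] at h
    split at h
    · exact ⟨[], by simpa using h⟩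
    · simp at h
  | succ m =>
    simp only [chainsF, Finset.mem_biUnion, Finset.mem_image] at h
    obtain ⟨X, _, l', _, rfl⟩ := h
    exact ⟨l', rfl⟩

lemma dd_zero (Y : YoungDiagram) : dd 0 Y = if Y = ⊥ then 1 else 0 := by
  rw [dd, chainsF]
  split <;> simp

@[simp] lemma dd_zero_bot : dd 0 ⊥ = 1 := by rw [dd_zero]; simp

lemma dd_succ (m : ℕ) (Y : YoungDiagram) :
    dd (m + 1) Y = ∑ X ∈ preds Y, dd m X := by
  rw [dd, chainsF, Finset.card_biUnion]
  · refine Finset.sum_congr rfl (fun X _ => ?_)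
    rw [Finset.card_image_of_injective _ (fun a b h => by simpa using h)]
    rfl
  · intro X hX X' hX' hne
    simp only [Finset.disjoint_left, Finset.mem_image]
    rintro l ⟨t, ht, rfl⟩ ⟨t', ht', hteq⟩
    obtain ⟨u, rfl⟩ := chainsF_head ht
    obtain ⟨u', rfl⟩ := chainsF_head ht'
    have := hteq
    simp only [List.cons_eq_cons] at this
    exact hne (this.2.1.symm)

lemma dd_ne_zero_card {m : ℕ} {Y : YoungDiagram} (h : dd m Y ≠ 0) : Y.card = m := by
  induction m generalizing Y with
  | zero =>
    rw [dd_zero] at h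
    split at h
    · subst ‹Y = ⊥›; simp [YoungDiagram.card]
    · simp at h
  | succ m ih =>
    rw [dd_succ] at h
    obtain ⟨X, hX, hX0⟩ := Finset.exists_ne_zero_of_sum_ne_zero h
    have := ih hX0
    have hcov := mem_preds.1 hX
    rw [cov_card hcov, this]

/-- Turn a function into a chain list. -/
def toListC (Z : ℕ → YoungDiagram) : ℕ → List YoungDiagram
  | 0 => [Z 0]
  | (k + 1) => Z (k + 1) :: toListC Z k

lemma toListC_mem {Z : ℕ → YoungDiagram} {m : ℕ} (h0 : Z 0 = ⊥)
    (hc : ∀ k < m, Cov (Z k) (Z (k + 1))) : toListC Z m ∈ chainsF m (Z m) := by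
  induction m with
  | zero => simp [toListC, chainsF, h0]
  | succ m ih =>
    rw [toListC, chainsF]
    rw [Finset.mem_biUnion]
    refine ⟨Z m, mem_preds.2 (hc m (by omega)), ?_⟩
    rw [Finset.mem_image]
    exact ⟨toListC Z m, ih (fun k hk => hc k (by omega)), rfl⟩

lemma toListC_inj {Z Z' : ℕ → YoungDiagram} {m : ℕ}
    (h : toListC Z m = toListC Z' m) : ∀ k ≤ m, Z k = Z' k := by
  induction m with
  | zero =>
    intro k hk
    interval_cases k
    simpa [toListC] using h
  | succ m ih =>
    rw [toListC, toListC, List.cons_eq_cons] at h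
    intro k hk
    rcases Nat.lt_or_ge k (m + 1) with h' | h'
    · exact ih h.2 k (by omega)
    · have : k = m + 1 := by omega
      subst this
      exact h.1

end SYTAux

namespace SYTAux

lemma yd_eq_of_le_card {X Y : YoungDiagram} (hle : X ≤ Y) (hc : Y.card ≤ X.card) : X = Y := by
  have := Finset.eq_of_subset_of_card_le (YoungDiagram.cells_subset_iff.2 hle) hc
  exact YoungDiagram.ext_iff.2 this

lemma up_le : ∀ (m : ℕ) (X : YoungDiagram), X.card = m →
    ∑ Y ∈ succs X, dd (m + 1) Y ≤ (m + 1) * dd m X := by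
  intro m
  induction m using Nat.strong_induction_on with
  | _ m ih =>
    intro X hX
    have hexp : ∀ Y ∈ succs X, dd (m + 1) Y =
        dd m X + ∑ ρ ∈ (preds Y).erase X, dd m ρ := by
      intro Y hY
      have hXY : X ∈ preds Y := mem_preds.2 (mem_succs.1 hY)
      rw [dd_succ, ← Finset.add_sum_erase _ _ hXY]
    rw [Finset.sum_congr rfl hexp, Finset.sum_add_distrib, Finset.sum_const, smul_eq_mul]
    set S : ℕ := ∑ Y ∈ succs X, ∑ ρ ∈ (preds Y).erase X, dd m ρ with hS
    set S' : ℕ := ∑ τ ∈ preds X, ∑ ρ ∈ (succs τ).erase X, dd m ρ with hS'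
    have hSS' : S ≤ S' := by
      rw [hS, hS', Finset.sum_sigma' (succs X) (fun Y => (preds Y).erase X) (fun _ ρ => dd m ρ),
        Finset.sum_sigma' (preds X) (fun τ => (succs τ).erase X) (fun _ ρ => dd m ρ)]
      set A := (succs X).sigma (fun Y => (preds Y).erase X) with hA
      set B := (preds X).sigma (fun τ => (succs τ).erase X) with hB
      have hfacts : ∀ p : (_ : YoungDiagram) × YoungDiagram, p ∈ A →
          (p.2 ⊓ X).card + 1 = m ∧ Cov (p.2 ⊓ X) X ∧ Cov (p.2 ⊓ X) p.2 ∧ p.2 ≠ X ∧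
            p.1 = p.2 ⊔ X := by
        rintro ⟨Y, ρ⟩ hp
        dsimp only
        rw [hA, Finset.mem_sigma, Finset.mem_erase] at hp
        obtain ⟨hY, hρne, hρ⟩ := hp
        have hcovXY : Cov X Y := mem_succs.1 hY
        have hcovρY : Cov ρ Y := mem_preds.1 hρ
        have hYc : Y.card = m + 1 := by rw [cov_card hcovXY, hX]
        have hρc : ρ.card = m := by
          have := cov_card hcovρY; omega
        have hτle : (ρ ⊓ X) ≤ X := inf_le_right
        have hτne : (ρ ⊓ X) ≠ X := by
          intro h
          have hXρ : X ≤ ρ := by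
            conv_lhs => rw [← h]
            exact inf_le_left
          exact hρne (yd_eq_of_le_card hXρ (by omega)).symm
        have hτlt : (ρ ⊓ X).card < m := by
          rw [← hX]
          apply Finset.card_lt_card
          rw [Finset.ssubset_iff_subset_ne]
          exact ⟨YoungDiagram.cells_subset_iff.2 hτle,
            fun h => hτne (YoungDiagram.ext_iff.2 h)⟩
        have hsup_le : (ρ ⊔ X) ≤ Y := sup_le hcovρY.1 hcovXY.1
        have hsupc : (ρ ⊔ X).card ≤ m + 1 := by
          rw [← hYc]
          exact Finset.card_le_card (YoungDiagram.cells_subset_iff.2 hsup_le)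
        have hcards : (ρ ⊔ X).card + (ρ ⊓ X).card = ρ.card + X.card := by
          show (ρ.cells ∪ X.cells).card + (ρ.cells ∩ X.cells).card = _
          exact Finset.card_union_add_card_inter _ _
        have hτc : (ρ ⊓ X).card + 1 = m := by omega
        have hsupeq : Y = ρ ⊔ X := by
          refine (yd_eq_of_le_card hsup_le ?_).symm
          omega
        exact ⟨hτc, ⟨hτle, by omega⟩, ⟨inf_le_left, by omega⟩, hρne, hsupeq⟩
      set e : (_ : YoungDiagram) × YoungDiagram → (_ : YoungDiagram) × YoungDiagram :=
        fun p => ⟨p.2 ⊓ X, p.2⟩ with he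
      have hmaps : ∀ p ∈ A, e p ∈ B := by
        intro p hp
        obtain ⟨hτc, hcov1, hcov2, hne, _⟩ := hfacts p hp
        rw [hB]
        rw [Finset.mem_sigma, Finset.mem_erase]
        exact ⟨mem_preds.2 hcov1, hne, mem_succs.2 hcov2⟩
      have hinj : ∀ p ∈ A, ∀ p' ∈ A, e p = e p' → p = p' := by
        rintro ⟨Y, ρ⟩ hp ⟨Y', ρ'⟩ hp' heq
        obtain ⟨_, _, _, _, hsup⟩ := hfacts _ hp
        obtain ⟨_, _, _, _, hsup'⟩ := hfacts _ hp'
        have hρ : ρ = ρ' := congrArg Sigma.snd heq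
        subst hρ
        have hYY : Y = Y' := by
          simp only at hsup hsup'
          rw [hsup, hsup']
        rw [hYY]
      calc ∑ p ∈ A, dd m p.2 = ∑ q ∈ A.image e, dd m q.2 := by
            rw [Finset.sum_image hinj]
        _ ≤ ∑ q ∈ B, dd m q.2 := by
            apply Finset.sum_le_sum_of_subset
            intro q hq
            rw [Finset.mem_image] at hq
            obtain ⟨p, hp, rfl⟩ := hq
            exact hmaps p hp
    have hstep3 : ∀ τ ∈ preds X, dd m X + ∑ ρ ∈ (succs τ).erase X, dd m ρ ≤
        m * dd (m - 1) τ := by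
      intro τ hτ
      have hcov := mem_preds.1 hτ
      have hm : τ.card + 1 = m := by rw [← hX, cov_card hcov]
      have hXτ : X ∈ succs τ := mem_succs.2 hcov
      rw [Finset.add_sum_erase _ _ hXτ]
      have hih := ih τ.card (by omega) τ rfl
      rw [hm] at hih
      have hk : m - 1 = τ.card := by omega
      rw [hk]
      exact hih
    have hbranch : m * (∑ τ ∈ preds X, dd (m - 1) τ) ≤ m * dd m X := by
      cases m with
      | zero => simp
      | succ k =>
        have : (k + 1) - 1 = k := by omega
        rw [this, ← dd_succ]
    have hP : (succs X).card ≤ (preds X).card + 1 := card_succs_le X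
    have hbig : ((succs X).card * dd m X + S) + (preds X).card * dd m X ≤
        ((m + 1) * dd m X) + (preds X).card * dd m X := by
      calc ((succs X).card * dd m X + S) + (preds X).card * dd m X
          ≤ ((succs X).card * dd m X + S') + (preds X).card * dd m X := by
            omega
        _ = (succs X).card * dd m X +
            (∑ τ ∈ preds X, (dd m X + ∑ ρ ∈ (succs τ).erase X, dd m ρ)) := by
            rw [Finset.sum_add_distrib, Finset.sum_const, smul_eq_mul, hS']
            ring
        _ ≤ (succs X).card * dd m X + (∑ τ ∈ preds X, m * dd (m - 1) τ) := by
            exact Nat.add_le_add_left (Finset.sum_le_sum hstep3) _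
        _ = (succs X).card * dd m X + m * (∑ τ ∈ preds X, dd (m - 1) τ) := by
            rw [Finset.mul_sum]
        _ ≤ ((preds X).card + 1) * dd m X + m * dd m X := by
            exact Nat.add_le_add (Nat.mul_le_mul_right _ hP) hbranch
        _ = ((m + 1) * dd m X) + (preds X).card * dd m X := by ring
    exact Nat.le_of_add_le_add_right hbig

end SYTAux

namespace SYTAux

instance covDecidable (X Y : YoungDiagram) : Decidable (Cov X Y) :=
  decidable_of_iff (X.cells ⊆ Y.cells ∧ Y.cells.card = X.cells.card + 1)
    ⟨fun h => ⟨YoungDiagram.cells_subset_iff.1 h.1, h.2⟩,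
     fun h => ⟨YoungDiagram.cells_subset_iff.2 h.1, h.2⟩⟩

lemma lower_of_closed {s : Finset (ℕ × ℕ)}
    (h : ∀ c ∈ s, (c.1 = 0 ∨ (c.1 - 1, c.2) ∈ s) ∧ (c.2 = 0 ∨ (c.1, c.2 - 1) ∈ s)) :
    IsLowerSet (↑s : Set (ℕ × ℕ)) := by
  have down1 : ∀ (k a b : ℕ), (a + k, b) ∈ s → (a, b) ∈ s := by
    intro k
    induction k with
    | zero => intro a b hh; simpa using hh
    | succ k ihk =>
      intro a b hh
      have h1 : (a + k + 1, b) ∈ s := by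
        have : a + (k + 1) = a + k + 1 := by omega
        rwa [this] at hh
      have h2 := ((h _ h1).1).resolve_left (by simp)
      simp only [Nat.add_sub_cancel] at h2
      exact ihk a b h2
  have down2 : ∀ (k a b : ℕ), (a, b + k) ∈ s → (a, b) ∈ s := by
    intro k
    induction k with
    | zero => intro a b hh; simpa using hh
    | succ k ihk =>
      intro a b hh
      have h1 : (a, b + k + 1) ∈ s := by
        have : b + (k + 1) = b + k + 1 := by omega
        rwa [this] at hh
      have h2 := ((h _ h1).2).resolve_left (by simp)
      simp only [Nat.add_sub_cancel] at h2
      exact ihk a b h2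
  rintro ⟨a, b⟩ ⟨p, q⟩ ⟨hp, hq⟩ hab
  simp only [Finset.mem_coe] at hab ⊢
  simp only at hp hq
  have h1 : (p, b) ∈ s := down1 (a - p) p b (by
    have : p + (a - p) = a := by omega
    rw [this]; exact hab)
  exact down2 (b - q) p q (by
    have : q + (b - q) = b := by omega
    rw [this]; exact h1)

/-- All Young diagrams with `m` cells, as a finset. -/
def Dg (m : ℕ) : Finset YoungDiagram :=
  (((Finset.range m ×ˢ Finset.range m).powerset.filter
    (fun s => ∀ c ∈ s, (c.1 = 0 ∨ (c.1 - 1, c.2) ∈ s) ∧ (c.2 = 0 ∨ (c.1, c.2 - 1) ∈ s))).attach.image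
    (fun s => YoungDiagram.mk s.1 (lower_of_closed (Finset.mem_filter.1 s.2).2))).filter
    (fun Y => Y.card = m)

lemma mem_Dg {m : ℕ} {Y : YoungDiagram} : Y ∈ Dg m ↔ Y.card = m := by
  constructor
  · intro h
    exact (Finset.mem_filter.1 h).2
  · intro h
    rw [Dg, Finset.mem_filter]
    refine ⟨?_, h⟩
    rw [Finset.mem_image]
    have hclosed : ∀ c ∈ Y.cells, (c.1 = 0 ∨ (c.1 - 1, c.2) ∈ Y.cells) ∧
        (c.2 = 0 ∨ (c.1, c.2 - 1) ∈ Y.cells) := by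
      intro c hc
      rw [YoungDiagram.mem_cells] at hc
      constructor
      · rcases Nat.eq_zero_or_pos c.1 with h0 | h0
        · left; exact h0
        · right
          rw [YoungDiagram.mem_cells]
          exact le_lower ⟨by simp only; omega, by simp only; omega⟩ hc
      · rcases Nat.eq_zero_or_pos c.2 with h0 | h0
        · left; exact h0
        · right
          rw [YoungDiagram.mem_cells]
          exact le_lower ⟨by simp only; omega, by simp only; omega⟩ hc
    have hbox : Y.cells ⊆ Finset.range m ×ˢ Finset.range m := by
      intro c hc
      rw [YoungDiagram.mem_cells] at hc
      rw [Finset.mem_product, Finset.mem_range, Finset.mem_range]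
      constructor
      · -- c.1 < m : the column below c has c.1 + 1 distinct cells
        have hsub : (Finset.range (c.1 + 1)).image (fun i => (i, c.2)) ⊆ Y.cells := by
          intro x hx
          rw [Finset.mem_image] at hx
          obtain ⟨i, hi, rfl⟩ := hx
          rw [Finset.mem_range] at hi
          rw [YoungDiagram.mem_cells]
          exact le_lower (by constructor <;> simp <;> omega) hc
        have := Finset.card_le_card hsub
        rw [Finset.card_image_of_injective _ (fun a b hab => by simpa using hab),
          Finset.card_range] at this
        have hcard : Y.cells.card = m := h
        omega
      · have hsub : (Finset.range (c.2 + 1)).image (fun j => (c.1, j)) ⊆ Y.cells := by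
          intro x hx
          rw [Finset.mem_image] at hx
          obtain ⟨j, hj, rfl⟩ := hx
          rw [Finset.mem_range] at hj
          rw [YoungDiagram.mem_cells]
          exact le_lower (by constructor <;> simp <;> omega) hc
        have := Finset.card_le_card hsub
        rw [Finset.card_image_of_injective _ (fun a b hab => by simpa using hab),
          Finset.card_range] at this
        have hcard : Y.cells.card = m := h
        omega
    have hmem : Y.cells ∈ (Finset.range m ×ˢ Finset.range m).powerset.filter
        (fun s => ∀ c ∈ s, (c.1 = 0 ∨ (c.1 - 1, c.2) ∈ s) ∧ (c.2 = 0 ∨ (c.1, c.2 - 1) ∈ s)) := by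
      rw [Finset.mem_filter, Finset.mem_powerset]
      exact ⟨hbox, hclosed⟩
    refine ⟨⟨Y.cells, hmem⟩, Finset.mem_attach _ _, ?_⟩
    exact YoungDiagram.ext_iff.2 rfl

lemma Dg_zero : Dg 0 = {⊥} := by
  ext Y
  rw [mem_Dg, Finset.mem_singleton]
  constructor
  · intro h
    have : Y.cells = ∅ := Finset.card_eq_zero.1 h
    exact YoungDiagram.ext_iff.2 (by simp [this])
  · rintro rfl; simp [YoungDiagram.card]

lemma preds_eq_filter {m : ℕ} {Y : YoungDiagram} (hY : Y.card = m + 1) :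
    preds Y = (Dg m).filter (fun X => Cov X Y) := by
  ext X
  rw [mem_preds, Finset.mem_filter, mem_Dg]
  constructor
  · intro h
    refine ⟨?_, h⟩
    have := cov_card h
    omega
  · exact fun h => h.2

lemma succs_eq_filter {m : ℕ} {X : YoungDiagram} (hX : X.card = m) :
    succs X = (Dg (m + 1)).filter (fun Y => Cov X Y) := by
  ext Y
  rw [mem_succs, Finset.mem_filter, mem_Dg]
  constructor
  · intro h
    refine ⟨?_, h⟩
    rw [cov_card h, hX]
  · exact fun h => h.2

/-- The main counting bound: the sum of squares of chain counts is at most `m!`. -/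
theorem total_le (m : ℕ) : ∑ Y ∈ Dg m, (dd m Y) ^ 2 ≤ m.factorial := by
  induction m with
  | zero => simp [Dg_zero]
  | succ m ih =>
    have hswap : ∑ Y ∈ Dg (m + 1), (dd (m + 1) Y) ^ 2 =
        ∑ X ∈ Dg m, (∑ Y ∈ succs X, dd (m + 1) Y) * dd m X := by
      have h1 : ∀ Y ∈ Dg (m + 1), (dd (m + 1) Y) ^ 2 =
          ∑ X ∈ Dg m, if Cov X Y then dd (m + 1) Y * dd m X else 0 := by
        intro Y hY
        calc (dd (m + 1) Y) ^ 2
            = dd (m + 1) Y * ∑ X ∈ Dg m, (if Cov X Y then dd m X else 0) := by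
              rw [pow_two]
              congr 1
              rw [dd_succ, preds_eq_filter (mem_Dg.1 hY), Finset.sum_filter]
          _ = ∑ X ∈ Dg m, (if Cov X Y then dd (m + 1) Y * dd m X else 0) := by
              rw [Finset.mul_sum]
              refine Finset.sum_congr rfl (fun X _ => ?_)
              split <;> simp
      rw [Finset.sum_congr rfl h1, Finset.sum_comm]
      refine Finset.sum_congr rfl (fun X hX => ?_)
      rw [succs_eq_filter (mem_Dg.1 hX), Finset.sum_filter, Finset.sum_mul]
      refine Finset.sum_congr rfl (fun Y _ => ?_)
      split <;> simp
    rw [hswap]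
    calc ∑ X ∈ Dg m, (∑ Y ∈ succs X, dd (m + 1) Y) * dd m X
        ≤ ∑ X ∈ Dg m, ((m + 1) * dd m X) * dd m X := by
          refine Finset.sum_le_sum (fun X hX => ?_)
          exact Nat.mul_le_mul_right _ (up_le m X (mem_Dg.1 hX))
      _ = (m + 1) * ∑ X ∈ Dg m, (dd m X) ^ 2 := by
          rw [Finset.mul_sum]
          refine Finset.sum_congr rfl (fun X _ => ?_)
          ring
      _ ≤ (m + 1) * m.factorial := Nat.mul_le_mul_left _ ih
      _ = (m + 1).factorial := (Nat.factorial_succ m).symm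

end SYTAux

namespace SYTAux

/-- The diagram consisting of all rows below the first. -/
def tailD (Y : YoungDiagram) : YoungDiagram where
  cells := (Y.cells.filter (fun c => c.1 ≠ 0)).image (fun c => (c.1 - 1, c.2))
  isLowerSet := by
    rintro ⟨a, b⟩ ⟨p, q⟩ ⟨hp, hq⟩ hab
    simp only [Finset.coe_image, Set.mem_image, Finset.mem_coe, Finset.mem_filter] at hab ⊢
    obtain ⟨c, ⟨hcY, hc0⟩, hc⟩ := hab
    simp only at hp hq
    rw [Prod.ext_iff] at hc
    simp only at hc
    refine ⟨(p + 1, q), ⟨?_, by simp⟩, by simp⟩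
    have h1 : (p + 1, q) ≤ c := by
      rw [show c = (c.1, c.2) from rfl]
      constructor <;> simp only <;> omega
    exact le_lower h1 hcY

lemma mem_tailD {Y : YoungDiagram} {x : ℕ × ℕ} :
    x ∈ tailD Y ↔ (x.1 + 1, x.2) ∈ Y := by
  rw [← YoungDiagram.mem_cells, tailD]
  simp only [Finset.mem_image, Finset.mem_filter]
  constructor
  · rintro ⟨c, ⟨hcY, hc0⟩, hc⟩
    rw [Prod.ext_iff] at hc
    simp only at hc
    have hx : (x.1 + 1, x.2) = c := by
      rw [Prod.ext_iff]
      constructor <;> simp only <;> omega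
    rw [hx]
    exact hcY
  · intro h
    exact ⟨(x.1 + 1, x.2), ⟨h, by simp⟩, by simp⟩

lemma card_tailD (Y : YoungDiagram) : (tailD Y).card + Y.rowLen 0 = Y.card := by
  have h1 : (tailD Y).card = (Y.cells.filter (fun c => c.1 ≠ 0)).card := by
    apply Finset.card_image_of_injOn
    intro c hc c' hc' heq
    simp only [Finset.mem_coe, Finset.mem_filter] at hc hc'
    rw [Prod.ext_iff] at heq
    simp only at heq
    rw [Prod.ext_iff]
    constructor
    · omega
    · exact heq.2
  have h2 : (Y.cells.filter (fun c => c.1 = 0)).card = Y.rowLen 0 := by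
    rw [YoungDiagram.rowLen_eq_card]
    congr 1
  have h3 := Finset.card_filter_add_card_filter_not (s := Y.cells)
    (fun c => c.1 = 0)
  have h4 : (Y.cells.filter (fun c => ¬ c.1 = 0)).card = (Y.cells.filter (fun c => c.1 ≠ 0)).card :=
    rfl
  have h5 : Y.card = Y.cells.card := rfl
  omega

/-- The SYT conditions (rows and columns increasing). -/
def SYTcond (Y : YoungDiagram) (f : (↥Y.cells) ≃ Fin Y.cells.card) : Prop :=
  (∀ a b : Y.cells, (a : ℕ × ℕ).1 = (b : ℕ × ℕ).1 → (a : ℕ × ℕ).2 < (b : ℕ × ℕ).2 →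
      f a < f b) ∧
  (∀ a b : Y.cells, (a : ℕ × ℕ).2 = (b : ℕ × ℕ).2 → (a : ℕ × ℕ).1 < (b : ℕ × ℕ).1 →
      f a < f b)

lemma syt_mono {Y : YoungDiagram} {f : (↥Y.cells) ≃ Fin Y.cells.card} (hf : SYTcond Y f)
    (a b : ↥Y.cells) (h1 : a.1.1 ≤ b.1.1) (h2 : a.1.2 ≤ b.1.2) :
    f a ≤ f b := by
  have hmid : (a.1.1, b.1.2) ∈ Y.cells := le_lower ⟨h1, le_refl _⟩ b.2
  set mid : ↥Y.cells := ⟨(a.1.1, b.1.2), hmid⟩ with hmiddef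
  have step1 : f a ≤ f mid := by
    rcases lt_or_eq_of_le h2 with h | h
    · exact le_of_lt (hf.1 a mid rfl h)
    · have : a = mid := by
        apply Subtype.ext
        rw [Prod.ext_iff]
        exact ⟨rfl, h⟩
      rw [this]
  have step2 : f mid ≤ f b := by
    rcases lt_or_eq_of_le h1 with h | h
    · exact le_of_lt (hf.2 mid b rfl h)
    · have : mid = b := by
        apply Subtype.ext
        rw [Prod.ext_iff]
        exact ⟨h, rfl⟩
      rw [this]
  exact le_trans step1 step2

/-- The set of values in the first row. -/
def rowSet {Y : YoungDiagram} (f : (↥Y.cells) ≃ Fin Y.cells.card) : Finset (Fin Y.cells.card) :=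
  (Y.cells.attach.filter (fun c => c.1.1 = 0)).image f

lemma mem_rowSet {Y : YoungDiagram} {f : (↥Y.cells) ≃ Fin Y.cells.card} {c : ↥Y.cells} :
    f c ∈ rowSet f ↔ c.1.1 = 0 := by
  rw [rowSet, Finset.mem_image]
  constructor
  · rintro ⟨c', hc', heq⟩
    rw [Finset.mem_filter] at hc'
    have : c' = c := f.injective heq
    rw [← this]
    exact hc'.2
  · intro h
    exact ⟨c, Finset.mem_filter.2 ⟨Finset.mem_attach _ _, h⟩, rfl⟩

lemma card_rowSet {Y : YoungDiagram} (f : (↥Y.cells) ≃ Fin Y.cells.card) :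
    (rowSet f).card = Y.rowLen 0 := by
  rw [rowSet, Finset.card_image_of_injective _ f.injective]
  rw [YoungDiagram.rowLen_eq_card]
  apply Finset.card_bij (fun a _ => a.1)
  · intro a ha
    rw [Finset.mem_filter] at ha
    rw [YoungDiagram.row, Finset.mem_filter]
    exact ⟨a.2, ha.2⟩
  · intro a _ b _ h
    exact Subtype.ext h
  · intro b hb
    rw [YoungDiagram.row, Finset.mem_filter] at hb
    exact ⟨⟨b, hb.1⟩, Finset.mem_filter.2 ⟨Finset.mem_attach _ _, hb.2⟩, rfl⟩

/-- The cells of the tail diagram filled by time `t`. -/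
def Wcells {Y : YoungDiagram} (f : (↥Y.cells) ≃ Fin Y.cells.card) (t : ℕ) : Finset (ℕ × ℕ) :=
  (Y.cells.attach.filter (fun c => c.1.1 ≠ 0 ∧ ((f c : ℕ) < t))).image
    (fun c => (c.1.1 - 1, c.1.2))

lemma mem_Wcells {Y : YoungDiagram} {f : (↥Y.cells) ≃ Fin Y.cells.card} {t : ℕ} {x : ℕ × ℕ} :
    x ∈ Wcells f t ↔ ∃ h : (x.1 + 1, x.2) ∈ Y.cells, (f ⟨(x.1 + 1, x.2), h⟩ : ℕ) < t := by
  rw [Wcells, Finset.mem_image]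
  constructor
  · rintro ⟨c, hc, heq⟩
    rw [Finset.mem_filter] at hc
    obtain ⟨-, hc0, hct⟩ := hc
    rw [Prod.ext_iff] at heq
    simp only at heq
    have hx : (x.1 + 1, x.2) = c.1 := by
      rw [show c.1 = (c.1.1, c.1.2) from rfl, Prod.ext_iff]
      constructor <;> simp only <;> omega
    have hmem : (x.1 + 1, x.2) ∈ Y.cells := by rw [hx]; exact c.2
    refine ⟨hmem, ?_⟩
    have heq2 : (⟨(x.1 + 1, x.2), hmem⟩ : ↥Y.cells) = c := Subtype.ext hx
    rw [heq2]
    exact hct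
  · rintro ⟨h, hval⟩
    refine ⟨⟨(x.1 + 1, x.2), h⟩, Finset.mem_filter.2 ⟨Finset.mem_attach _ _, ⟨by simp, hval⟩⟩, ?_⟩
    simp

/-- The partial tail diagram of a standard tableau. -/
def Wd {Y : YoungDiagram} (f : (↥Y.cells) ≃ Fin Y.cells.card) (hf : SYTcond Y f) (t : ℕ) :
    YoungDiagram where
  cells := Wcells f t
  isLowerSet := by
    rintro ⟨a, b⟩ ⟨p, q⟩ ⟨hp, hq⟩ hab
    simp only [Finset.mem_coe] at hab ⊢
    rw [mem_Wcells] at hab ⊢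
    obtain ⟨hmem, hval⟩ := hab
    simp only at hp hq hmem hval ⊢
    have hmem' : (p + 1, q) ∈ Y.cells := by
      rw [YoungDiagram.mem_cells] at hmem ⊢
      exact le_lower ⟨by simp only; omega, by simp only; omega⟩ hmem
    refine ⟨hmem', ?_⟩
    have := syt_mono hf ⟨(p + 1, q), hmem'⟩ ⟨(a + 1, b), hmem⟩ (by simp only; omega)
      (by simp only; omega)
    omega

lemma mem_Wd {Y : YoungDiagram} {f : (↥Y.cells) ≃ Fin Y.cells.card} {hf : SYTcond Y f} {t : ℕ}
    {x : ℕ × ℕ} :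
    x ∈ Wd f hf t ↔ ∃ h : (x.1 + 1, x.2) ∈ Y.cells, (f ⟨(x.1 + 1, x.2), h⟩ : ℕ) < t :=
  mem_Wcells

lemma Wd_zero {Y : YoungDiagram} {f : (↥Y.cells) ≃ Fin Y.cells.card} (hf : SYTcond Y f) :
    Wd f hf 0 = ⊥ := by
  ext x
  rw [YoungDiagram.mem_cells, YoungDiagram.mem_cells, mem_Wd]
  simp

lemma Wd_mono {Y : YoungDiagram} {f : (↥Y.cells) ≃ Fin Y.cells.card} (hf : SYTcond Y f)
    {t t' : ℕ} (h : t ≤ t') : Wd f hf t ≤ Wd f hf t' := by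
  intro x hx
  rw [mem_Wd] at hx ⊢
  obtain ⟨h1, h2⟩ := hx
  exact ⟨h1, by omega⟩

lemma Wd_top {Y : YoungDiagram} {f : (↥Y.cells) ≃ Fin Y.cells.card} (hf : SYTcond Y f)
    {t : ℕ} (ht : ∀ c : ↥Y.cells, c.1.1 ≠ 0 → (f c : ℕ) < t) :
    Wd f hf t = tailD Y := by
  ext x
  rw [YoungDiagram.mem_cells, YoungDiagram.mem_cells, mem_Wd, mem_tailD]
  constructor
  · rintro ⟨h, -⟩
    rwa [YoungDiagram.mem_cells] at h
  · intro h
    rw [← YoungDiagram.mem_cells] at h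
    exact ⟨h, ht ⟨(x.1 + 1, x.2), h⟩ (by simp)⟩

end SYTAux

namespace SYTAux

variable {Y : YoungDiagram}

/-- The values not in the first row. -/
def Bset (f : (↥Y.cells) ≃ Fin Y.cells.card) : Finset (Fin Y.cells.card) :=
  Finset.univ \ rowSet f

lemma card_Bset (f : (↥Y.cells) ≃ Fin Y.cells.card) :
    (Bset f).card = Y.cells.card - Y.rowLen 0 := by
  rw [Bset, Finset.card_sdiff_of_subset (Finset.subset_univ _), Finset.card_univ, Fintype.card_fin,
    card_rowSet]

lemma mem_Bset {f : (↥Y.cells) ≃ Fin Y.cells.card} {c : ↥Y.cells} :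
    f c ∈ Bset f ↔ c.1.1 ≠ 0 := by
  rw [Bset, Finset.mem_sdiff]
  simp only [Finset.mem_univ, true_and]
  rw [mem_rowSet]

/-- The increasing enumeration of the values not in the first row. -/
def bfun (f : (↥Y.cells) ≃ Fin Y.cells.card) :
    Fin (Y.cells.card - Y.rowLen 0) ↪o Fin Y.cells.card :=
  Finset.orderEmbOfFin (Bset f) (card_Bset f)

lemma bfun_mem (f : (↥Y.cells) ≃ Fin Y.cells.card) (j : Fin (Y.cells.card - Y.rowLen 0)) :
    bfun f j ∈ Bset f :=
  Finset.orderEmbOfFin_mem _ _ _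

lemma bfun_surj (f : (↥Y.cells) ≃ Fin Y.cells.card) {v : Fin Y.cells.card} (hv : v ∈ Bset f) :
    ∃ j, bfun f j = v := by
  have := Finset.range_orderEmbOfFin (Bset f) (card_Bset f)
  have hv' : v ∈ Set.range (Finset.orderEmbOfFin (Bset f) (card_Bset f)) := by
    rw [this]; exact hv
  exact hv'

/-- Time thresholds. -/
def tf (f : (↥Y.cells) ≃ Fin Y.cells.card) : ℕ → ℕ
  | 0 => 0
  | (k + 1) => if h : k < Y.cells.card - Y.rowLen 0 then (bfun f ⟨k, h⟩ : ℕ) + 1 else Y.cells.card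

lemma lt_tf_iff {f : (↥Y.cells) ≃ Fin Y.cells.card} {v : Fin Y.cells.card} (hv : v ∈ Bset f)
    {k : ℕ} (hk : k < Y.cells.card - Y.rowLen 0) :
    ((v : ℕ) < tf f (k + 1)) ↔ ((v : ℕ) < tf f k ∨ v = bfun f ⟨k, hk⟩) := by
  obtain ⟨j, rfl⟩ := bfun_surj f hv
  have h1 : tf f (k + 1) = (bfun f ⟨k, hk⟩ : ℕ) + 1 := by rw [tf, dif_pos hk]
  have hle : ∀ (i i' : Fin (Y.cells.card - Y.rowLen 0)),
      ((bfun f i : ℕ) ≤ (bfun f i' : ℕ)) ↔ (i : ℕ) ≤ (i' : ℕ) := by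
    intro i i'
    rw [← Fin.le_def, OrderEmbedding.le_iff_le, Fin.le_def]
  have hinj : ∀ (i i' : Fin (Y.cells.card - Y.rowLen 0)),
      bfun f i = bfun f i' ↔ (i : ℕ) = (i' : ℕ) := by
    intro i i'
    constructor
    · intro h
      have := (bfun f).injective h
      exact congrArg Fin.val this
    · intro h
      congr 1
      exact Fin.ext h
  rw [h1]
  have key1 : ((bfun f j : ℕ) < (bfun f ⟨k, hk⟩ : ℕ) + 1) ↔ (j : ℕ) ≤ k := by
    rw [Nat.lt_succ_iff]
    exact hle j ⟨k, hk⟩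
  rw [key1, hinj j ⟨k, hk⟩]
  cases k with
  | zero =>
    rw [tf]
    simp
  | succ k' =>
    have hk' : k' < Y.cells.card - Y.rowLen 0 := by omega
    have h2 : tf f (k' + 1) = (bfun f ⟨k', hk'⟩ : ℕ) + 1 := by rw [tf, dif_pos hk']
    rw [h2]
    have key2 : ((bfun f j : ℕ) < (bfun f ⟨k', hk'⟩ : ℕ) + 1) ↔ (j : ℕ) ≤ k' := by
      rw [Nat.lt_succ_iff]
      exact hle j ⟨k', hk'⟩
    rw [key2]
    simp only
    omega

lemma not_lt_tf_self {f : (↥Y.cells) ≃ Fin Y.cells.card} {k : ℕ}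
    (hk : k < Y.cells.card - Y.rowLen 0) : ¬ ((bfun f ⟨k, hk⟩ : ℕ) < tf f k) := by
  cases k with
  | zero => rw [tf]; omega
  | succ k' =>
    have hk' : k' < Y.cells.card - Y.rowLen 0 := by omega
    rw [tf, dif_pos hk']
    intro h
    have h2 : bfun f ⟨k' + 1, hk⟩ ≤ bfun f ⟨k', hk'⟩ := by
      rw [Fin.le_def]; omega
    have := (OrderEmbedding.le_iff_le (bfun f)).1 h2
    rw [Fin.le_def] at this
    simp only at this
    omega

lemma tf_mono {f : (↥Y.cells) ≃ Fin Y.cells.card} {k : ℕ}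
    (hk : k < Y.cells.card - Y.rowLen 0) : tf f k ≤ tf f (k + 1) := by
  have h1 : tf f (k + 1) = (bfun f ⟨k, hk⟩ : ℕ) + 1 := by rw [tf, dif_pos hk]
  rw [h1]
  have h2 := not_lt_tf_self (f := f) (k := k) hk
  omega

/-- The chain of partial tail diagrams. -/
def Zf (f : (↥Y.cells) ≃ Fin Y.cells.card) (hf : SYTcond Y f) (k : ℕ) : YoungDiagram :=
  Wd f hf (tf f k)

lemma mem_Zf {f : (↥Y.cells) ≃ Fin Y.cells.card} {hf : SYTcond Y f} {k : ℕ} {x : ℕ × ℕ} :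
    x ∈ Zf f hf k ↔ ∃ h : (x.1 + 1, x.2) ∈ Y.cells, (f ⟨(x.1 + 1, x.2), h⟩ : ℕ) < tf f k :=
  mem_Wd

lemma Zf_zero (f : (↥Y.cells) ≃ Fin Y.cells.card) (hf : SYTcond Y f) : Zf f hf 0 = ⊥ :=
  Wd_zero hf

lemma Zf_cov (f : (↥Y.cells) ≃ Fin Y.cells.card) (hf : SYTcond Y f) {k : ℕ}
    (hk : k < Y.cells.card - Y.rowLen 0) : Cov (Zf f hf k) (Zf f hf (k + 1)) := by
  set v : Fin Y.cells.card := bfun f ⟨k, hk⟩ with hv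
  set cstar : ↥Y.cells := f.symm v with hcstar
  have hfc : f cstar = v := f.apply_symm_apply v
  have hc0 : cstar.1.1 ≠ 0 := by
    rw [← mem_Bset (f := f), hfc]
    exact bfun_mem f _
  set x : ℕ × ℕ := (cstar.1.1 - 1, cstar.1.2) with hx
  have hxeta : (x.1 + 1, x.2) = cstar.1 := by
    rw [hx, show cstar.1 = (cstar.1.1, cstar.1.2) from rfl, Prod.ext_iff]
    constructor <;> simp only <;> omega
  have hxmem : (x.1 + 1, x.2) ∈ Y.cells := by rw [hxeta]; exact cstar.2
  have hfx : f ⟨(x.1 + 1, x.2), hxmem⟩ = v := by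
    rw [show (⟨(x.1 + 1, x.2), hxmem⟩ : ↥Y.cells) = cstar from Subtype.ext hxeta]
    exact hfc
  have hins : (Zf f hf (k + 1)).cells = insert x (Zf f hf k).cells := by
    ext y
    rw [Finset.mem_insert, YoungDiagram.mem_cells, YoungDiagram.mem_cells, mem_Zf, mem_Zf]
    constructor
    · rintro ⟨h, hval⟩
      have hvB : f ⟨(y.1 + 1, y.2), h⟩ ∈ Bset f := by
        rw [mem_Bset]
        simp
      rw [lt_tf_iff hvB hk] at hval
      rcases hval with hval | hval
      · right; exact ⟨h, hval⟩
      · left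
        have hcells : (⟨(y.1 + 1, y.2), h⟩ : ↥Y.cells) = cstar := by
          apply f.injective
          rw [hfc, hval, hv]
        have := congrArg Subtype.val hcells
        rw [Prod.ext_iff] at this
        simp only at this
        rw [hx, Prod.ext_iff]
        constructor <;> simp only <;> omega
    · rintro (rfl | ⟨h, hval⟩)
      · exact ⟨hxmem, by rw [hfx, hv, tf, dif_pos hk]; omega⟩
      · exact ⟨h, by have := tf_mono (f := f) hk; omega⟩
  have hnotmem : x ∉ (Zf f hf k).cells := by
    rw [YoungDiagram.mem_cells, mem_Zf]
    rintro ⟨h, hval⟩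
    have heqq : (⟨(x.1 + 1, x.2), h⟩ : ↥Y.cells) = ⟨(x.1 + 1, x.2), hxmem⟩ := rfl
    rw [heqq, hfx] at hval
    exact not_lt_tf_self hk hval
  constructor
  · rw [← YoungDiagram.cells_subset_iff, hins]
    exact Finset.subset_insert _ _
  · show (Zf f hf (k + 1)).cells.card = (Zf f hf k).cells.card + 1
    rw [hins, Finset.card_insert_of_notMem hnotmem]

lemma Zf_top (f : (↥Y.cells) ≃ Fin Y.cells.card) (hf : SYTcond Y f) :
    Zf f hf (Y.cells.card - Y.rowLen 0) = tailD Y := by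
  apply Wd_top
  intro c hc
  have hvB : f c ∈ Bset f := mem_Bset.2 hc
  obtain ⟨j, hj⟩ := bfun_surj f hvB
  rcases Nat.eq_zero_or_pos (Y.cells.card - Y.rowLen 0) with h0 | h0
  · exact absurd (h0 ▸ j).2 (by omega)
  · obtain ⟨k, hk⟩ : ∃ k, Y.cells.card - Y.rowLen 0 = k + 1 := ⟨_, (Nat.succ_pred_eq_of_pos h0).symm⟩
    rw [hk, tf, dif_pos (by omega)]
    have hle : bfun f j ≤ bfun f ⟨k, by omega⟩ := by
      apply (OrderEmbedding.le_iff_le _).2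
      rw [Fin.le_def]
      simp only
      have := j.2
      omega
    rw [← hj]
    rw [Fin.le_def] at hle
    omega

lemma Zf_chain_mem (f : (↥Y.cells) ≃ Fin Y.cells.card) (hf : SYTcond Y f) :
    toListC (Zf f hf) (Y.cells.card - Y.rowLen 0) ∈
      chainsF (Y.cells.card - Y.rowLen 0) (tailD Y) := by
  have := toListC_mem (Zf_zero f hf) (fun k hk => Zf_cov f hf hk)
  rwa [Zf_top f hf] at this

end SYTAux

namespace SYTAux

variable {Y : YoungDiagram}

instance sytcondDec (Y : YoungDiagram) : DecidablePred (SYTcond Y) := fun f =>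
  decidable_of_iff ((∀ a b : Y.cells, (a : ℕ × ℕ).1 = (b : ℕ × ℕ).1 →
      (a : ℕ × ℕ).2 < (b : ℕ × ℕ).2 → f a < f b) ∧
    (∀ a b : Y.cells, (a : ℕ × ℕ).2 = (b : ℕ × ℕ).2 → (a : ℕ × ℕ).1 < (b : ℕ × ℕ).1 →
      f a < f b)) Iff.rfl

lemma row_agree {f f' : (↥Y.cells) ≃ Fin Y.cells.card} (hf : SYTcond Y f) (hf' : SYTcond Y f')
    (hA : rowSet f = rowSet f') : ∀ c : ↥Y.cells, c.1.1 = 0 → f c = f' c := by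
  have hmem0 : ∀ j : Fin (Y.rowLen 0), ((0 : ℕ), (j : ℕ)) ∈ Y.cells := by
    intro j
    rw [YoungDiagram.mem_cells, YoungDiagram.mem_iff_lt_rowLen]
    exact j.2
  set g : Fin (Y.rowLen 0) → Fin Y.cells.card := fun j => f ⟨((0 : ℕ), (j : ℕ)), hmem0 j⟩ with hg
  set g' : Fin (Y.rowLen 0) → Fin Y.cells.card := fun j => f' ⟨((0 : ℕ), (j : ℕ)), hmem0 j⟩
    with hg'
  have hgs : StrictMono g := by
    intro j j' hjj
    exact hf.1 _ _ rfl (by simp only; exact hjj)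
  have hgs' : StrictMono g' := by
    intro j j' hjj
    exact hf'.1 _ _ rfl (by simp only; exact hjj)
  have hgmem : ∀ x, g x ∈ rowSet f := fun x => mem_rowSet.2 rfl
  have hgmem' : ∀ x, g' x ∈ rowSet f := fun x => by
    rw [hA]; exact mem_rowSet.2 rfl
  have huniq := Finset.orderEmbOfFin_unique (card_rowSet f) hgmem hgs
  have huniq' := Finset.orderEmbOfFin_unique (card_rowSet f) hgmem' hgs'
  have hgg : g = g' := by rw [huniq, huniq']
  intro c hc
  have hlt : c.1.2 < Y.rowLen 0 := by
    rw [← YoungDiagram.mem_iff_lt_rowLen (i := 0)]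
    have : ((0 : ℕ), c.1.2) = c.1 := by
      rw [Prod.ext_iff]
      exact ⟨hc.symm, rfl⟩
    rw [this]
    exact c.2
  have hceq : c = ⟨((0 : ℕ), c.1.2), hmem0 ⟨c.1.2, hlt⟩⟩ := by
    apply Subtype.ext
    rw [Prod.ext_iff]
    exact ⟨hc, rfl⟩
  calc f c = g ⟨c.1.2, hlt⟩ := congrArg f hceq
    _ = g' ⟨c.1.2, hlt⟩ := by rw [hgg]
    _ = f' c := (congrArg f' hceq).symm

lemma nonrow_agree {f f' : (↥Y.cells) ≃ Fin Y.cells.card} (hf : SYTcond Y f) (hf' : SYTcond Y f')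
    (hA : rowSet f = rowSet f')
    (hZ : ∀ k ≤ Y.cells.card - Y.rowLen 0, Zf f hf k = Zf f' hf' k) :
    ∀ c : ↥Y.cells, c.1.1 ≠ 0 → f c = f' c := by
  have hB : Bset f = Bset f' := by rw [Bset, Bset, hA]
  have hb : ∀ j, bfun f j = bfun f' j := by
    have h1 : (fun j => (bfun f' j : Fin Y.cells.card)) =
        ⇑((Bset f).orderEmbOfFin (card_Bset f)) := by
      apply Finset.orderEmbOfFin_unique (card_Bset f)
      · intro x
        rw [hB]
        exact bfun_mem f' x
      · exact (bfun f').strictMono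
    intro j
    have h2 : bfun f' j = (Bset f).orderEmbOfFin (card_Bset f) j := congrFun h1 j
    rw [h2]
    rfl
  have htf : ∀ k, tf f k = tf f' k := by
    intro k
    cases k with
    | zero => rfl
    | succ k =>
      simp only [tf]
      by_cases h : k < Y.cells.card - Y.rowLen 0
      · rw [dif_pos h, dif_pos h, hb]
      · rw [dif_neg h, dif_neg h]
  intro c hc
  obtain ⟨j, hj⟩ := bfun_surj f (mem_Bset.2 hc)
  obtain ⟨j', hj'⟩ := bfun_surj f' ((mem_Bset (f := f')).2 hc)
  set x : ℕ × ℕ := (c.1.1 - 1, c.1.2) with hx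
  have hxeta : (x.1 + 1, x.2) = c.1 := by
    rw [hx, show c.1 = (c.1.1, c.1.2) from rfl, Prod.ext_iff]
    constructor <;> simp only <;> omega
  have hxmem : (x.1 + 1, x.2) ∈ Y.cells := by rw [hxeta]; exact c.2
  have hfx : f ⟨(x.1 + 1, x.2), hxmem⟩ = f c := by
    rw [show (⟨(x.1 + 1, x.2), hxmem⟩ : ↥Y.cells) = c from Subtype.ext hxeta]
  have hfx' : f' ⟨(x.1 + 1, x.2), hxmem⟩ = f' c := by
    rw [show (⟨(x.1 + 1, x.2), hxmem⟩ : ↥Y.cells) = c from Subtype.ext hxeta]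
  -- x enters the f-chain at step j+1 and the f'-chain at step j'+1
  have hmem1 : x ∈ Zf f hf ((j : ℕ) + 1) := by
    rw [mem_Zf]
    refine ⟨hxmem, ?_⟩
    rw [hfx, ← hj, tf, dif_pos j.2]
    have : (⟨(j : ℕ), j.2⟩ : Fin _) = j := by apply Fin.ext; rfl
    rw [this]
    omega
  have hmem1' : x ∈ Zf f' hf' ((j' : ℕ) + 1) := by
    rw [mem_Zf]
    refine ⟨hxmem, ?_⟩
    rw [hfx', ← hj', tf, dif_pos j'.2]
    have : (⟨(j' : ℕ), j'.2⟩ : Fin _) = j' := by apply Fin.ext; rfl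
    rw [this]
    omega
  have hj'j : (j' : ℕ) ≤ (j : ℕ) := by
    have h1 : x ∈ Zf f' hf' ((j : ℕ) + 1) := by
      rw [← hZ ((j : ℕ) + 1) (by have := j.2; omega)]
      exact hmem1
    rw [mem_Zf] at h1
    obtain ⟨h, hval⟩ := h1
    rw [tf, dif_pos j.2] at hval
    have hval2 : (f' c : ℕ) < (bfun f' ⟨(j : ℕ), j.2⟩ : ℕ) + 1 := by
      rw [← hfx']; exact hval
    have h2 : (f' c : ℕ) ≤ (bfun f' ⟨(j : ℕ), j.2⟩ : ℕ) := by omega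
    rw [← hj'] at h2
    have h3 : bfun f' j' ≤ bfun f' ⟨(j : ℕ), j.2⟩ := by
      rw [Fin.le_def]; exact h2
    have := (OrderEmbedding.le_iff_le _).1 h3
    rw [Fin.le_def] at this
    exact this
  have hjj' : (j : ℕ) ≤ (j' : ℕ) := by
    have h1 : x ∈ Zf f hf ((j' : ℕ) + 1) := by
      rw [hZ ((j' : ℕ) + 1) (by have := j'.2; omega)]
      exact hmem1'
    rw [mem_Zf] at h1
    obtain ⟨h, hval⟩ := h1
    rw [tf, dif_pos j'.2] at hval
    have hval2 : (f c : ℕ) < (bfun f ⟨(j' : ℕ), j'.2⟩ : ℕ) + 1 := by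
      rw [← hfx]; exact hval
    have h2 : (f c : ℕ) ≤ (bfun f ⟨(j' : ℕ), j'.2⟩ : ℕ) := by omega
    rw [← hj] at h2
    have h3 : bfun f j ≤ bfun f ⟨(j' : ℕ), j'.2⟩ := by
      rw [Fin.le_def]; exact h2
    have := (OrderEmbedding.le_iff_le _).1 h3
    rw [Fin.le_def] at this
    exact this
  have hjeq : j' = j := by
    apply Fin.ext
    omega
  rw [← hj, ← hj', hjeq, hb]

lemma sytCard_le (Y : YoungDiagram) :
    sytCard Y ≤ (Y.cells.card.choose (Y.rowLen 0)) *
      dd (Y.cells.card - Y.rowLen 0) (tailD Y) := by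
  classical
  have hcongr : sytCard Y =
      Fintype.card {f : (↥Y.cells) ≃ Fin Y.cells.card // SYTcond Y f} := by
    rw [sytCard]
    apply Fintype.card_congr
    apply Equiv.subtypeEquivRight
    intro f
    exact Iff.rfl
  rw [hcongr]
  set m := Y.cells.card - Y.rowLen 0 with hm
  set target := (Finset.powersetCard (Y.rowLen 0)
      (Finset.univ : Finset (Fin Y.cells.card))) ×ˢ chainsF m (tailD Y) with htarget
  have hkey : Fintype.card {f : (↥Y.cells) ≃ Fin Y.cells.card // SYTcond Y f} ≤ target.card := by
    rw [← Finset.card_univ]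
    apply Finset.card_le_card_of_injOn
      (fun σ : {f : (↥Y.cells) ≃ Fin Y.cells.card // SYTcond Y f} =>
        (rowSet σ.1, toListC (Zf σ.1 σ.2) m))
    · intro σ _
      rw [htarget, Finset.mem_coe, Finset.mem_product]
      constructor
      · rw [Finset.mem_powersetCard_univ]
        exact card_rowSet σ.1
      · exact Zf_chain_mem σ.1 σ.2
    · intro σ _ σ' _ heq
      simp only [Prod.ext_iff] at heq
      obtain ⟨hA, hL⟩ := heq
      have hZ : ∀ k ≤ m, Zf σ.1 σ.2 k = Zf σ'.1 σ'.2 k := toListC_inj hL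
      apply Subtype.ext
      apply Equiv.ext
      intro c
      by_cases hc : c.1.1 = 0
      · exact row_agree σ.2 σ'.2 hA c hc
      · exact nonrow_agree σ.2 σ'.2 hA hZ c hc
  calc Fintype.card {f : (↥Y.cells) ≃ Fin Y.cells.card // SYTcond Y f} ≤ target.card := hkey
    _ = (Y.cells.card.choose (Y.rowLen 0)) * dd m (tailD Y) := by
        rw [htarget, Finset.card_product, Finset.card_powersetCard, Finset.card_univ,
          Fintype.card_fin]
        rfl

end SYTAux

namespace SYTAux

lemma card_cellsOfRowLens (w : List ℕ) : (YoungDiagram.cellsOfRowLens w).card = w.sum := by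
  induction w with
  | nil => rfl
  | cons a t ih =>
    rw [YoungDiagram.cellsOfRowLens]
    rw [Finset.card_union_of_disjoint]
    · rw [Finset.card_map, ih, Finset.card_product, Finset.card_singleton, Finset.card_range,
        List.sum_cons, one_mul]
    · rw [Finset.disjoint_left]
      rintro ⟨i, j⟩ h1 h2
      rw [Finset.mem_product, Finset.mem_singleton] at h1
      rw [Finset.mem_map] at h2
      obtain ⟨⟨i', j'⟩, _, heq⟩ := h2
      rw [Prod.ext_iff] at heq
      simp only [Function.Embedding.prodMap, Function.Embedding.coeFn_mk] at heq
      have : i = 0 := h1.1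
      have : i' + 1 = i := heq.1
      omega

lemma card_ofRowLens (w : List ℕ) (hw : w.SortedGE) :
    (YoungDiagram.ofRowLens w hw).card = w.sum :=
  card_cellsOfRowLens w

lemma rowLen0_ofRowLens (w : List ℕ) (hw : w.SortedGE) :
    (YoungDiagram.ofRowLens w hw).rowLen 0 = w.headI := by
  cases w with
  | nil =>
    show (YoungDiagram.ofRowLens [] hw).rowLen 0 = 0
    by_contra h
    have h0 : (0, 0) ∈ YoungDiagram.ofRowLens [] hw := by
      rw [YoungDiagram.mem_iff_lt_rowLen]
      omega
    rw [YoungDiagram.mem_ofRowLens] at h0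
    obtain ⟨h1, -⟩ := h0
    simp at h1
  | cons a t =>
    have := YoungDiagram.rowLen_ofRowLens (w := a :: t) (hw := hw) ⟨0, by simp⟩
    simpa using this

lemma card_toYD {n : ℕ} (p : Nat.Partition n) : (toYD p).card = n := by
  rw [toYD, card_ofRowLens]
  have h1 : ((p.parts.sort (· ≥ ·) : List ℕ) : Multiset ℕ) = p.parts := Multiset.sort_eq _ _
  have h2 : (p.parts.sort (· ≥ ·)).sum = (((p.parts.sort (· ≥ ·) : List ℕ)) : Multiset ℕ).sum :=
    rfl
  rw [h2, h1, p.parts_sum]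

lemma rowLen0_toYD {n : ℕ} (p : Nat.Partition n) : (toYD p).rowLen 0 = firstPart p :=
  rowLen0_ofRowLens _ _

lemma toYD_injective {n : ℕ} : Function.Injective (toYD (n := n)) := by
  intro p q h
  have hp : (toYD p).rowLens = p.parts.sort (· ≥ ·) :=
    YoungDiagram.rowLens_ofRowLens_eq_self (fun x hx => p.parts_pos (by
      rwa [← Multiset.mem_sort (· ≥ ·)]))
  have hq : (toYD q).rowLens = q.parts.sort (· ≥ ·) :=
    YoungDiagram.rowLens_ofRowLens_eq_self (fun x hx => q.parts_pos (by
      rwa [← Multiset.mem_sort (· ≥ ·)]))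
  have hsort : p.parts.sort (· ≥ ·) = q.parts.sort (· ≥ ·) := by
    rw [← hp, ← hq, h]
  apply Nat.Partition.ext
  have h1 : ((p.parts.sort (· ≥ ·) : List ℕ) : Multiset ℕ) = p.parts := Multiset.sort_eq _ _
  have h2 : ((q.parts.sort (· ≥ ·) : List ℕ) : Multiset ℕ) = q.parts := Multiset.sort_eq _ _
  rw [← h1, ← h2, hsort]

lemma tail_recover {Y Y' : YoungDiagram} (hr : Y.rowLen 0 = Y'.rowLen 0)
    (ht : tailD Y = tailD Y') : Y = Y' := by
  ext x
  rw [YoungDiagram.mem_cells, YoungDiagram.mem_cells]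
  obtain ⟨i, j⟩ := x
  rcases Nat.eq_zero_or_pos i with rfl | hi
  · rw [YoungDiagram.mem_iff_lt_rowLen, YoungDiagram.mem_iff_lt_rowLen, hr]
  · have e1 : (i, j) = ((i - 1) + 1, j) := by
      rw [Prod.ext_iff]; constructor <;> simp <;> omega
    have hYl := mem_tailD (Y := Y) (x := ((i - 1 : ℕ), j))
    have hYr := mem_tailD (Y := Y') (x := ((i - 1 : ℕ), j))
    simp only at hYl hYr
    rw [e1, ← hYl, ← hYr, ht]

end SYTAux


/-- For partitions of `n` with fixed first part `λ₁`, the sum of squared dimensions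
satisfies `∑ d_λ² ≤ C(n,λ₁)² (n−λ₁)!`. -/
theorem stmt10 (n l1 : ℕ) :
    ∑ p ∈ Finset.univ.filter (fun p : Nat.Partition n => firstPart p = l1),
      (sytCard (toYD p)) ^ 2 ≤ (n.choose l1) ^ 2 * (n - l1).factorial := by
  classical
  set s := Finset.univ.filter (fun p : Nat.Partition n => firstPart p = l1) with hs
  set m := n - l1 with hm
  have hfact : ∀ p ∈ s, (toYD p).cells.card = n ∧ (toYD p).rowLen 0 = l1 := by
    intro p hp
    refine ⟨SYTAux.card_toYD p, ?_⟩
    rw [SYTAux.rowLen0_toYD]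
    exact (Finset.mem_filter.1 hp).2
  have step1 : ∑ p ∈ s, (sytCard (toYD p)) ^ 2 ≤
      ∑ p ∈ s, (n.choose l1 * SYTAux.dd m (SYTAux.tailD (toYD p))) ^ 2 := by
    refine Finset.sum_le_sum (fun p hp => ?_)
    apply Nat.pow_le_pow_left
    have h := SYTAux.sytCard_le (toYD p)
    rwa [(hfact p hp).1, (hfact p hp).2] at h
  have step2 : ∑ p ∈ s, (n.choose l1 * SYTAux.dd m (SYTAux.tailD (toYD p))) ^ 2 =
      (n.choose l1) ^ 2 * ∑ p ∈ s, (SYTAux.dd m (SYTAux.tailD (toYD p))) ^ 2 := by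
    rw [Finset.mul_sum]
    refine Finset.sum_congr rfl (fun p _ => ?_)
    ring
  have hinj : ∀ p ∈ s, ∀ q ∈ s, SYTAux.tailD (toYD p) = SYTAux.tailD (toYD q) → p = q := by
    intro p hp q hq h
    apply SYTAux.toYD_injective
    apply SYTAux.tail_recover _ h
    rw [(hfact p hp).2, (hfact q hq).2]
  have step3 : ∑ p ∈ s, (SYTAux.dd m (SYTAux.tailD (toYD p))) ^ 2 ≤
      ∑ X ∈ SYTAux.Dg m, (SYTAux.dd m X) ^ 2 := by
    have himg : ∑ X ∈ s.image (fun p => SYTAux.tailD (toYD p)), (SYTAux.dd m X) ^ 2 =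
        ∑ p ∈ s, (SYTAux.dd m (SYTAux.tailD (toYD p))) ^ 2 := Finset.sum_image hinj
    rw [← himg]
    apply Finset.sum_le_sum_of_subset
    intro X hX
    rw [Finset.mem_image] at hX
    obtain ⟨p, hp, rfl⟩ := hX
    rw [SYTAux.mem_Dg]
    have h1 := SYTAux.card_tailD (toYD p)
    rw [(hfact p hp).2] at h1
    have h2 : (toYD p).card = n := (hfact p hp).1
    omega
  calc ∑ p ∈ s, (sytCard (toYD p)) ^ 2
      ≤ (n.choose l1) ^ 2 * ∑ p ∈ s, (SYTAux.dd m (SYTAux.tailD (toYD p))) ^ 2 := by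
        rw [← step2]; exact step1
    _ ≤ (n.choose l1) ^ 2 * ∑ X ∈ SYTAux.Dg m, (SYTAux.dd m X) ^ 2 :=
        Nat.mul_le_mul_left _ step3
    _ ≤ (n.choose l1) ^ 2 * m.factorial :=
        Nat.mul_le_mul_left _ (SYTAux.total_le m)
end
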